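/- arXiv:2603.07790 — 3 statements merged into one kernel-verified Lean document; each statement's English description precedes it below -/
import Mathlib

section
/- Let Z_1 and Z_2 be independent ℝ^d-valued random vectors whose laws satisfy weak Poincaré inequalities with nonincreasing rate functions β_{Z_1} and β_{Z_2} respectively. Then the law of Z_1 + Z_2 satisfies a weak Poincaré inequality with rate function s ↦ β_{Z_1}(s/2) + β_{Z_2}(s/2); that is, for every s > 0 and every bounded Lipschitz f : ℝ^d → ℝ, Var(f(Z_1+Z_2)) ≤ (β_{Z_1}(s/2) + β_{Z_2}(s/2)) · E[|∇f(Z_1+Z_2)|²] + s·Osc(f)². -/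
open MeasureTheory Real Filter Set
open scoped ENNReal RealInnerProductSpace BigOperators

noncomputable section

/-- Euclidean space `ℝ^d`. -/
abbrev Euc (d : ℕ) := EuclideanSpace ℝ (Fin d)

/-- The variance of `f` under `μ` : `∫ f² dμ − (∫ f dμ)²`. -/
def var {E : Type*} [MeasurableSpace E] (μ : Measure E) (f : E → ℝ) : ℝ :=
  (∫ x, (f x) ^ 2 ∂μ) - (∫ x, f x ∂μ) ^ 2

/-- The oscillation `sup f − inf f` of a function. -/
def osc {E : Type*} (f : E → ℝ) : ℝ := sSup (Set.range f) - sInf (Set.range f)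

/-- The oscillation of `f` on a set `s` : `sup_s f − inf_s f`. -/
def oscOn {E : Type*} (f : E → ℝ) (s : Set E) : ℝ := sSup (f '' s) - sInf (f '' s)

/-- Bounded Lipschitz real valued functions. -/
def BddLip {E : Type*} [PseudoEMetricSpace E] (f : E → ℝ) : Prop :=
  (∃ K, LipschitzWith K f) ∧ (∃ M, ∀ x, |f x| ≤ M)

/-- `μ` satisfies a weak Poincaré inequality with rate function `β`:
for all `s > 0` and all bounded Lipschitz `f`,
`Var_μ(f) ≤ β(s) ∫ |∇f|² dμ + s · Osc(f)²`. -/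
def WeakPoincare {E : Type*} [NormedAddCommGroup E] [NormedSpace ℝ E] [MeasurableSpace E]
    (μ : Measure E) (β : ℝ → ℝ) : Prop :=
  ∀ s : ℝ, 0 < s → ∀ f : E → ℝ, BddLip f →
    var μ f ≤ β s * (∫ x, ‖fderiv ℝ f x‖ ^ 2 ∂μ) + s * (osc f) ^ 2

/-- `μ` satisfies a weighted Poincaré inequality with weight `ω` and constant `C`:
`Var_μ(f) ≤ C ∫ |∇f|² ω² dμ` for all bounded Lipschitz `f`. -/
def WeightedPoincare {E : Type*} [NormedAddCommGroup E] [NormedSpace ℝ E] [MeasurableSpace E]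
    (μ : Measure E) (ω : E → ℝ) (C : ℝ) : Prop :=
  ∀ f : E → ℝ, BddLip f →
    var μ f ≤ C * (∫ x, ‖fderiv ℝ f x‖ ^ 2 * (ω x) ^ 2 ∂μ)

/-- The entropy `Ent_μ(f²) = ∫ f² ln(f²/∫f²dμ) dμ`. -/
def entSq {E : Type*} [MeasurableSpace E] (μ : Measure E) (f : E → ℝ) : ℝ :=
  ∫ x, (f x) ^ 2 * Real.log ((f x) ^ 2 / ∫ y, (f y) ^ 2 ∂μ) ∂μ

/-- `μ` satisfies a weak logarithmic Sobolev inequality with rate function `β`. -/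
def WeakLogSobolev {E : Type*} [NormedAddCommGroup E] [NormedSpace ℝ E] [MeasurableSpace E]
    (μ : Measure E) (β : ℝ → ℝ) : Prop :=
  ∀ s : ℝ, 0 < s → ∀ f : E → ℝ, BddLip f →
    entSq μ f ≤ β s * (∫ x, ‖fderiv ℝ f x‖ ^ 2 ∂μ) + s * (osc f) ^ 2

/-- `μ` satisfies a weighted logarithmic Sobolev inequality with weight `ω`, constant `C`. -/
def WeightedLogSobolev {E : Type*} [NormedAddCommGroup E] [NormedSpace ℝ E] [MeasurableSpace E]
    (μ : Measure E) (ω : E → ℝ) (C : ℝ) : Prop :=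
  ∀ f : E → ℝ, BddLip f →
    entSq μ f ≤ C * (∫ x, ‖fderiv ℝ f x‖ ^ 2 * (ω x) ^ 2 ∂μ)

/-- The Laplacian on Euclidean space: sum of second partial derivatives. -/
def lap {d : ℕ} (f : Euc d → ℝ) (x : Euc d) : ℝ :=
  ∑ i : Fin d, iteratedFDeriv ℝ 2 f x ![EuclideanSpace.single i 1, EuclideanSpace.single i 1]

/-- The operator `L_V f = Δf − ⟨∇V, ∇f⟩`. -/
def LV {d : ℕ} (V f : Euc d → ℝ) (x : Euc d) : ℝ :=
  lap f x - ⟪gradient V x, gradient f x⟫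

/-- The weighted generator `L^ω_V g = ω² Δg + ⟨∇ω² − ω² ∇V, ∇g⟩`. -/
def Lw {d : ℕ} (ω V f : Euc d → ℝ) (x : Euc d) : ℝ :=
  (ω x) ^ 2 * lap f x +
    ⟪gradient (fun y => (ω y) ^ 2) x - (ω x) ^ 2 • gradient V x, gradient f x⟫

/-- The `L²(μ)`-capacity of a set `A`:
`inf { ∫ |∇φ|² dμ : φ Lipschitz with compact support, 1_A ≤ φ ≤ 1 }`. -/
def cap {E : Type*} [NormedAddCommGroup E] [NormedSpace ℝ E] [MeasurableSpace E]
    (μ : Measure E) (A : Set E) : ℝ :=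
  sInf ((fun φ : E → ℝ => ∫ x, ‖fderiv ℝ φ x‖ ^ 2 ∂μ) ''
    {φ | (∃ K, LipschitzWith K φ) ∧ HasCompactSupport φ ∧
      (∀ x, A.indicator 1 x ≤ φ x) ∧ (∀ x, φ x ≤ 1)})

section aux
set_option linter.unusedSectionVars false

variable {E : Type*} [NormedAddCommGroup E] [NormedSpace ℝ E]

lemma fderiv_shift (f : E → ℝ) (y x : E) :
    fderiv ℝ (fun z => f (z + y)) x = fderiv ℝ f (x + y) := by
  by_cases h : DifferentiableAt ℝ f (x + y)
  · have h1 : HasFDerivAt (fun z : E => z + y) (ContinuousLinearMap.id ℝ E) x :=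
      (hasFDerivAt_id x).add_const y
    have h2 := h.hasFDerivAt.comp x h1
    rw [ContinuousLinearMap.comp_id] at h2
    exact h2.fderiv
  · have h2 : ¬ DifferentiableAt ℝ (fun z => f (z + y)) x := by
      intro hc
      have h3 : DifferentiableAt ℝ (fun w : E => w - y) (x + y) :=
        differentiableAt_id.sub_const y
      have h4 : DifferentiableAt ℝ ((fun z => f (z + y)) ∘ (fun w : E => w - y)) (x + y) :=
        DifferentiableAt.comp _ (by simpa using hc) h3
      simp only [Function.comp_def, sub_add_cancel] at h4
      exact h (by simpa using h4)
    rw [fderiv_zero_of_not_differentiableAt h, fderiv_zero_of_not_differentiableAt h2]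

lemma osc_shift (f : E → ℝ) (y : E) : osc (fun x => f (x + y)) = osc f := by
  have hsurj : Function.Surjective (fun x : E => x + y) := fun z => ⟨z - y, by simp⟩
  have hs : Set.range (fun x : E => f (x + y)) = Set.range f := hsurj.range_comp f
  rw [osc, osc, hs]

lemma integrable_of_bound {α : Type*} [MeasurableSpace α] (μ : Measure α) [IsFiniteMeasure μ]
    {u : α → ℝ} (hm : AEStronglyMeasurable u μ) (M : ℝ) (hb : ∀ x, |u x| ≤ M) :
    Integrable u μ :=
  (integrable_const M).mono' hm (Eventually.of_forall fun x => by
    simpa [Real.norm_eq_abs] using hb x)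

lemma var_eq {α : Type*} [MeasurableSpace α] (μ : Measure α) [IsProbabilityMeasure μ]
    {u : α → ℝ} (h1 : Integrable u μ) (h2 : Integrable (fun x => u x ^ 2) μ) :
    var μ u = ∫ x, (u x - ∫ y, u y ∂μ) ^ 2 ∂μ := by
  set c := ∫ y, u y ∂μ with hc
  have e : (fun x => (u x - c) ^ 2) = fun x => (u x ^ 2 - (2 * c) * u x) + c ^ 2 :=
    funext fun x => by ring
  have ia : Integrable (fun x => u x ^ 2 - 2 * c * u x) μ := h2.sub (h1.const_mul (2 * c))
  have ib : Integrable (fun x => 2 * c * u x) μ := h1.const_mul (2 * c)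
  rw [var, e, integral_add ia (integrable_const _), integral_sub h2 ib,
    integral_const_mul (2 * c), integral_const]
  simp only [measure_univ, probReal_univ, ENNReal.toReal_one, smul_eq_mul, one_mul, ← hc]
  ring

lemma sq_integral_le {α : Type*} [MeasurableSpace α] (μ : Measure α) [IsProbabilityMeasure μ]
    {u : α → ℝ} (h1 : Integrable u μ) (h2 : Integrable (fun x => u x ^ 2) μ) :
    (∫ x, u x ∂μ) ^ 2 ≤ ∫ x, u x ^ 2 ∂μ := by
  have h := var_eq μ h1 h2
  have h0 : 0 ≤ var μ u := h ▸ integral_nonneg fun x => sq_nonneg _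
  rw [var] at h0
  linarith

lemma abs_integral_le_of_bound {α : Type*} [MeasurableSpace α] (μ : Measure α)
    [IsProbabilityMeasure μ] {u : α → ℝ} (hu : Integrable u μ) (M : ℝ)
    (hb : ∀ x, |u x| ≤ M) : |∫ x, u x ∂μ| ≤ M := by
  calc |∫ x, u x ∂μ| ≤ ∫ x, |u x| ∂μ := by
        simpa [Real.norm_eq_abs] using norm_integral_le_integral_norm (μ := μ) u
    _ ≤ ∫ _x, M ∂μ := integral_mono hu.abs (integrable_const _) fun x => hb x
    _ = M := by simp

lemma lipschitz_conv {E : Type*} [NormedAddCommGroup E] [NormedSpace ℝ E] [MeasurableSpace E]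
    [OpensMeasurableSpace E] (μ : Measure E) [IsProbabilityMeasure μ] {K : NNReal} {h : E → ℝ}
    (hl : LipschitzWith K h) (M : ℝ) (hb : ∀ x, |h x| ≤ M) :
    LipschitzWith K (fun y => ∫ x, h (x + y) ∂μ) := by
  have hint : ∀ y : E, Integrable (fun x => h (x + y)) μ := fun y =>
    integrable_of_bound μ
      ((hl.continuous.comp (continuous_id.add continuous_const)).aestronglyMeasurable) M
      (fun x => hb _)
  apply LipschitzWith.of_dist_le_mul
  intro y y'
  rw [Real.dist_eq, ← integral_sub (hint y) (hint y')]
  calc |∫ x, (h (x + y) - h (x + y')) ∂μ| ≤ ∫ x, |h (x + y) - h (x + y')| ∂μ := by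
        simpa [Real.norm_eq_abs] using
          norm_integral_le_integral_norm (μ := μ) (fun x => h (x + y) - h (x + y'))
    _ ≤ ∫ _x, (K : ℝ) * dist y y' ∂μ := by
        apply integral_mono ((hint y).sub (hint y')).abs (integrable_const _)
        intro x
        simpa [Real.dist_eq, dist_add_left] using hl.dist_le_mul (x + y) (x + y')
    _ = (K : ℝ) * dist y y' := by simp

end aux

set_option maxHeartbeats 2000000 in
/-- the law of the sum of two independent random vectors whose laws
satisfy weak Poincaré inequalities satisfies a weak Poincaré inequality with rate
`s ↦ β₁(s/2) + β₂(s/2)`. -/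

theorem stmt_1 (d : ℕ) (μ₁ μ₂ : Measure (Euc d))
    (hprob₁ : IsProbabilityMeasure μ₁) (hprob₂ : IsProbabilityMeasure μ₂)
    (β₁ β₂ : ℝ → ℝ)
    (hβ₁nonneg : ∀ s, 0 ≤ β₁ s) (hβ₂nonneg : ∀ s, 0 ≤ β₂ s)
    (hβ₁mono : Antitone β₁) (hβ₂mono : Antitone β₂)
    (h₁ : WeakPoincare μ₁ β₁) (h₂ : WeakPoincare μ₂ β₂) :
    WeakPoincare
      (Measure.map (fun p : Euc d × Euc d => p.1 + p.2) (μ₁.prod μ₂))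
      (fun s => β₁ (s / 2) + β₂ (s / 2)) := by
  intro s hs f hf
  obtain ⟨⟨K, hK⟩, M, hM⟩ := hf
  have hfc : Continuous f := hK.continuous
  have hs2 : 0 < s / 2 := by linarith
  have hM0 : 0 ≤ M := le_trans (abs_nonneg _) (hM 0)
  set P : Measure (Euc d × Euc d) := μ₁.prod μ₂ with hPdef
  have hadd : Continuous fun p : Euc d × Euc d => p.1 + p.2 := continuous_fst.add continuous_snd
  have hFc : Continuous fun p : Euc d × Euc d => f (p.1 + p.2) := hfc.comp hadd
  have hFint : Integrable (fun p : Euc d × Euc d => f (p.1 + p.2)) P :=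
    integrable_of_bound P hFc.aestronglyMeasurable M fun p => hM _
  have hF2int : Integrable (fun p : Euc d × Euc d => f (p.1 + p.2) ^ 2) P :=
    integrable_of_bound P (hFc.pow 2).aestronglyMeasurable (M ^ 2) fun p => by
      rw [abs_pow]
      exact pow_le_pow_left₀ (abs_nonneg _) (hM _) 2
  -- the gradient-square integrand
  set D : Euc d × Euc d → ℝ := fun p => ‖fderiv ℝ f (p.1 + p.2)‖ ^ 2 with hDdef
  have hDmeas : Measurable D := (((measurable_fderiv ℝ f).norm).pow_const 2).comp hadd.measurable
  have hDbd : ∀ p, |D p| ≤ (K : ℝ) ^ 2 := fun p => by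
    rw [hDdef, abs_of_nonneg (by positivity)]
    exact pow_le_pow_left₀ (norm_nonneg _) (norm_fderiv_le_of_lipschitz ℝ hK) 2
  have hDint : Integrable D P := integrable_of_bound P hDmeas.aestronglyMeasurable _ hDbd
  -- slice integrability
  have hslice1 : ∀ y : Euc d, Integrable (fun x => f (x + y)) μ₁ := fun y =>
    integrable_of_bound μ₁
      ((hfc.comp (continuous_id.add continuous_const)).aestronglyMeasurable) M fun x => hM _
  have hslice2 : ∀ x : Euc d, Integrable (fun y => f (x + y)) μ₂ := fun x =>
    integrable_of_bound μ₂
      ((hfc.comp (continuous_const.add continuous_id)).aestronglyMeasurable) M fun y => hM _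
  have hslice2sq : ∀ x : Euc d, Integrable (fun y => f (x + y) ^ 2) μ₂ := fun x =>
    integrable_of_bound μ₂
      (((hfc.comp (continuous_const.add continuous_id)).pow 2).aestronglyMeasurable) (M ^ 2)
      fun y => by rw [abs_pow]; exact pow_le_pow_left₀ (abs_nonneg _) (hM _) 2
  -- partial averages
  set g : Euc d → ℝ := fun y => ∫ x, f (x + y) ∂μ₁ with hgdef
  set m : Euc d → ℝ := fun x => ∫ y, f (x + y) ∂μ₂ with hmdef
  have hgl : LipschitzWith K g := lipschitz_conv μ₁ hK M hM
  have hgb : ∀ y, |g y| ≤ M := fun y => abs_integral_le_of_bound μ₁ (hslice1 y) M (fun z => hM _)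
  have hml : LipschitzWith K m := by
    have he : m = fun x => ∫ y, f (y + x) ∂μ₂ := by
      funext x
      rw [hmdef]
      refine integral_congr_ae (Eventually.of_forall fun y => ?_)
      show f (x + y) = f (y + x)
      rw [add_comm]
    rw [he]; exact lipschitz_conv μ₂ hK M hM
  have hmb : ∀ x, |m x| ≤ M := fun x => abs_integral_le_of_bound μ₂ (hslice2 x) M (fun z => hM _)
  have hmc : Continuous m := hml.continuous
  have hgc : Continuous g := hgl.continuous
  -- integrability of marginal quantities
  have hqint : Integrable (fun y => ∫ x, f (x + y) ^ 2 ∂μ₁) μ₂ := hF2int.integral_prod_right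
  have hgint : Integrable g μ₂ := integrable_of_bound μ₂ hgc.aestronglyMeasurable M hgb
  have hg2int : Integrable (fun y => g y ^ 2) μ₂ :=
    integrable_of_bound μ₂ ((hgc.pow 2).aestronglyMeasurable) (M ^ 2) fun y => by
      rw [abs_pow]; exact pow_le_pow_left₀ (abs_nonneg _) (hgb _) 2
  have hmint : Integrable m μ₁ := integrable_of_bound μ₁ hmc.aestronglyMeasurable M hmb
  have hD1int : Integrable (fun y => ∫ x, D (x, y) ∂μ₁) μ₂ := hDint.integral_prod_right
  have hD2int : Integrable (fun x => ∫ y, D (x, y) ∂μ₂) μ₁ := hDint.integral_prod_left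
  -- Fubini identities
  have hA : ∫ p, f (p.1 + p.2) ∂P = ∫ x, m x ∂μ₁ := integral_prod _ hFint
  have hA' : ∫ p, f (p.1 + p.2) ∂P = ∫ y, g y ∂μ₂ := integral_prod_symm _ hFint
  have hq : ∫ p, f (p.1 + p.2) ^ 2 ∂P = ∫ y, (∫ x, f (x + y) ^ 2 ∂μ₁) ∂μ₂ :=
    integral_prod_symm _ hF2int
  have hD12 : ∫ p, D p ∂P = ∫ y, (∫ x, D (x, y) ∂μ₁) ∂μ₂ := integral_prod_symm _ hDint
  have hD21 : ∫ p, D p ∂P = ∫ x, (∫ y, D (x, y) ∂μ₂) ∂μ₁ := integral_prod _ hDint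
  -- rewrite the goal through the pushforward
  have hν1 : ∫ z, f z ∂(Measure.map (fun p : Euc d × Euc d => p.1 + p.2) P)
      = ∫ p, f (p.1 + p.2) ∂P :=
    integral_map hadd.aemeasurable hfc.aestronglyMeasurable
  have hν2 : ∫ z, f z ^ 2 ∂(Measure.map (fun p : Euc d × Euc d => p.1 + p.2) P)
      = ∫ p, f (p.1 + p.2) ^ 2 ∂P :=
    integral_map hadd.aemeasurable (hfc.pow 2).aestronglyMeasurable
  have hν3 : ∫ z, ‖fderiv ℝ f z‖ ^ 2 ∂(Measure.map (fun p : Euc d × Euc d => p.1 + p.2) P)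
      = ∫ p, D p ∂P :=
    integral_map hadd.aemeasurable
      (((measurable_fderiv ℝ f).norm.pow_const 2).aestronglyMeasurable)
  -- first term: average of slice variances
  have hvar1 : ∀ y : Euc d, var μ₁ (fun x => f (x + y))
      ≤ β₁ (s / 2) * (∫ x, D (x, y) ∂μ₁) + s / 2 * osc f ^ 2 := by
    intro y
    have hb : BddLip (fun x => f (x + y)) := by
      refine ⟨⟨K, ?_⟩, M, fun x => hM _⟩
      apply LipschitzWith.of_dist_le_mul
      intro a b
      simpa [dist_add_right] using hK.dist_le_mul (a + y) (b + y)
    have h := h₁ (s / 2) hs2 _ hb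
    have e1 : (∫ x, ‖fderiv ℝ (fun z => f (z + y)) x‖ ^ 2 ∂μ₁) = ∫ x, D (x, y) ∂μ₁ := by
      refine integral_congr_ae (Eventually.of_forall fun x => ?_)
      show ‖fderiv ℝ (fun z => f (z + y)) x‖ ^ 2 = D (x, y)
      simp only [fderiv_shift, hDdef]
    rwa [e1, osc_shift] at h
  have hvar_slice1 : (fun y => var μ₁ (fun x => f (x + y)))
      = fun y => (∫ x, f (x + y) ^ 2 ∂μ₁) - g y ^ 2 := rfl
  have hint_var1 : Integrable (fun y => var μ₁ (fun x => f (x + y))) μ₂ := by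
    rw [hvar_slice1]; exact hqint.sub hg2int
  have e1 : ∫ y, var μ₁ (fun x => f (x + y)) ∂μ₂
      = ∫ p, f (p.1 + p.2) ^ 2 ∂P - ∫ y, g y ^ 2 ∂μ₂ := by
    rw [hvar_slice1, integral_sub hqint hg2int, hq]
  have b1 : ∫ y, var μ₁ (fun x => f (x + y)) ∂μ₂
      ≤ β₁ (s / 2) * ∫ p, D p ∂P + s / 2 * osc f ^ 2 := by
    calc ∫ y, var μ₁ (fun x => f (x + y)) ∂μ₂
        ≤ ∫ y, (β₁ (s / 2) * (∫ x, D (x, y) ∂μ₁) + s / 2 * osc f ^ 2) ∂μ₂ :=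
          integral_mono hint_var1 ((hD1int.const_mul _).add (integrable_const _)) hvar1
      _ = β₁ (s / 2) * ∫ p, D p ∂P + s / 2 * osc f ^ 2 := by
          rw [integral_add (hD1int.const_mul _) (integrable_const _),
            integral_const_mul, ← hD12, integral_const]
          simp
  -- second term: Jensen then slice WPI
  have hvarg : var μ₂ g = ∫ y, (g y - ∫ p, f (p.1 + p.2) ∂P) ^ 2 ∂μ₂ := by
    rw [var_eq μ₂ hgint hg2int, hA']
  have hdiff : ∀ y, g y - ∫ p, f (p.1 + p.2) ∂P = ∫ x, (f (x + y) - m x) ∂μ₁ := fun y => by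
    rw [hA, integral_sub (hslice1 y) hmint, hgdef]
  have hHc : Continuous fun p : Euc d × Euc d => (f (p.1 + p.2) - m p.1) ^ 2 :=
    (hFc.sub (hmc.comp continuous_fst)).pow 2
  have hHbd : ∀ p : Euc d × Euc d, |(f (p.1 + p.2) - m p.1) ^ 2| ≤ (2 * M) ^ 2 := fun p => by
    have u1 := abs_le.1 (hM (p.1 + p.2)); have u2 := abs_le.1 (hmb p.1)
    rw [abs_of_nonneg (sq_nonneg _)]; nlinarith [u1.1, u1.2, u2.1, u2.2]
  have hHint : Integrable (fun p : Euc d × Euc d => (f (p.1 + p.2) - m p.1) ^ 2) P :=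
    integrable_of_bound P hHc.aestronglyMeasurable _ hHbd
  have hGsq : Integrable (fun y => (g y - ∫ p, f (p.1 + p.2) ∂P) ^ 2) μ₂ :=
    integrable_of_bound μ₂
      (((hgc.sub continuous_const).pow 2).aestronglyMeasurable) ((2 * M) ^ 2) fun y => by
      have u1 := abs_le.1 (hgb y)
      have u2 := abs_le.1 (abs_integral_le_of_bound P hFint M (fun p => hM _))
      rw [abs_of_nonneg (sq_nonneg _)]; nlinarith [u1.1, u1.2, u2.1, u2.2]
  have hjensen : var μ₂ g ≤ ∫ x, var μ₂ (fun y => f (x + y)) ∂μ₁ := by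
    rw [hvarg]
    have step : ∀ y, (g y - ∫ p, f (p.1 + p.2) ∂P) ^ 2 ≤ ∫ x, (f (x + y) - m x) ^ 2 ∂μ₁ := by
      intro y
      rw [hdiff y]
      exact sq_integral_le μ₁ ((hslice1 y).sub hmint)
        (integrable_of_bound μ₁
          ((((hfc.comp (continuous_id.add continuous_const)).sub hmc).pow 2).aestronglyMeasurable)
          ((2 * M) ^ 2) fun x => hHbd (x, y))
    calc ∫ y, (g y - ∫ p, f (p.1 + p.2) ∂P) ^ 2 ∂μ₂
        ≤ ∫ y, (∫ x, (f (x + y) - m x) ^ 2 ∂μ₁) ∂μ₂ :=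
          integral_mono hGsq hHint.integral_prod_right step
      _ = ∫ x, (∫ y, (f (x + y) - m x) ^ 2 ∂μ₂) ∂μ₁ :=
          (integral_prod_symm _ hHint).symm.trans (integral_prod _ hHint)
      _ = ∫ x, var μ₂ (fun y => f (x + y)) ∂μ₁ := by
          refine integral_congr_ae (Eventually.of_forall fun x => ?_)
          show (∫ y, (f (x + y) - m x) ^ 2 ∂μ₂) = var μ₂ (fun y => f (x + y))
          rw [var_eq μ₂ (hslice2 x) (hslice2sq x)]
  have hvar2 : ∀ x : Euc d, var μ₂ (fun y => f (x + y))
      ≤ β₂ (s / 2) * (∫ y, D (x, y) ∂μ₂) + s / 2 * osc f ^ 2 := by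
    intro x
    have he : (fun y => f (x + y)) = fun y => f (y + x) :=
      funext fun y => by rw [add_comm]
    have hb : BddLip (fun y => f (y + x)) := by
      refine ⟨⟨K, ?_⟩, M, fun y => hM _⟩
      apply LipschitzWith.of_dist_le_mul
      intro a b
      simpa [dist_add_right] using hK.dist_le_mul (a + x) (b + x)
    have h := h₂ (s / 2) hs2 _ hb
    have e2 : (∫ y, ‖fderiv ℝ (fun z => f (z + x)) y‖ ^ 2 ∂μ₂) = ∫ y, D (x, y) ∂μ₂ := by
      refine integral_congr_ae (Eventually.of_forall fun y => ?_)
      show ‖fderiv ℝ (fun z => f (z + x)) y‖ ^ 2 = D (x, y)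
      simp only [fderiv_shift, hDdef]
      rw [add_comm]
    rw [e2, osc_shift] at h
    rwa [he]
  have hvar_slice2 : (fun x => var μ₂ (fun y => f (x + y)))
      = fun x => (∫ y, f (x + y) ^ 2 ∂μ₂) - m x ^ 2 := rfl
  have hint_var2 : Integrable (fun x => var μ₂ (fun y => f (x + y))) μ₁ := by
    rw [hvar_slice2]
    exact hF2int.integral_prod_left.sub
      (integrable_of_bound μ₁ ((hmc.pow 2).aestronglyMeasurable) (M ^ 2) fun x => by
        rw [abs_pow]; exact pow_le_pow_left₀ (abs_nonneg _) (hmb _) 2)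
  have b2 : var μ₂ g ≤ β₂ (s / 2) * ∫ p, D p ∂P + s / 2 * osc f ^ 2 := by
    refine hjensen.trans ?_
    calc ∫ x, var μ₂ (fun y => f (x + y)) ∂μ₁
        ≤ ∫ x, (β₂ (s / 2) * (∫ y, D (x, y) ∂μ₂) + s / 2 * osc f ^ 2) ∂μ₁ :=
          integral_mono hint_var2 ((hD2int.const_mul _).add (integrable_const _)) hvar2
      _ = β₂ (s / 2) * ∫ p, D p ∂P + s / 2 * osc f ^ 2 := by
          rw [integral_add (hD2int.const_mul _) (integrable_const _),
            integral_const_mul, ← hD21, integral_const]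
          simp
  -- assemble
  have decomp : var (Measure.map (fun p : Euc d × Euc d => p.1 + p.2) P) f
      = ∫ y, var μ₁ (fun x => f (x + y)) ∂μ₂ + var μ₂ g := by
    rw [var, hν1, hν2, e1]
    have : var μ₂ g = ∫ y, g y ^ 2 ∂μ₂ - (∫ p, f (p.1 + p.2) ∂P) ^ 2 := by
      rw [var, hA']
    rw [this]; ring
  rw [decomp, hν3]
  calc ∫ y, var μ₁ (fun x => f (x + y)) ∂μ₂ + var μ₂ g
      ≤ (β₁ (s / 2) * ∫ p, D p ∂P + s / 2 * osc f ^ 2)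
        + (β₂ (s / 2) * ∫ p, D p ∂P + s / 2 * osc f ^ 2) := add_le_add b1 b2
    _ = (β₁ (s / 2) + β₂ (s / 2)) * ∫ p, D p ∂P + s * osc f ^ 2 := by ring
end
end

section
/- Let μ be a probability measure on ℝ^d satisfying a weak Poincaré inequality with nonincreasing rate β_μ. Then for every p > 2, every s > 0, and every bounded Lipschitz f : ℝ^d → ℝ, Var_μ(f) ≤ β_μ(s^{p/(p−2)} / 2^{(3p−2)/(p−2)}) · ∫ |∇f|² dμ + s · ‖f − μ(f)‖²_{L^p(μ)}. -/
open MeasureTheory Real Filter Set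
open scoped ENNReal RealInnerProductSpace BigOperators

noncomputable section

-- auxiliary lemmas

lemma aux_sq_le_of_abs_le {a b : ℝ} (h : |a| ≤ b) : a ^ 2 ≤ b ^ 2 :=
  (sq_abs a) ▸ pow_le_pow_left₀ (abs_nonneg a) h 2

lemma aux_integrable_of_bound {α : Type*} [MeasurableSpace α] {μ : Measure α}
    [IsFiniteMeasure μ] {u : α → ℝ} (hu : AEStronglyMeasurable u μ) {M : ℝ}
    (hM : ∀ x, |u x| ≤ M) : Integrable u μ :=
  Integrable.mono' (integrable_const M) hu (Filter.Eventually.of_forall fun x => by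
    simpa using hM x)

lemma aux_sq_integral_le {α : Type*} [MeasurableSpace α] {μ : Measure α}
    [IsProbabilityMeasure μ] {u : α → ℝ} (hu : Integrable u μ)
    (hu2 : Integrable (fun x => u x ^ 2) μ) :
    (∫ x, u x ∂μ) ^ 2 ≤ ∫ x, u x ^ 2 ∂μ := by
  set m := ∫ x, u x ∂μ with hm
  have hexp : ∀ x, (u x - m) ^ 2 = u x ^ 2 - (2 * m) * u x + m ^ 2 := fun x => by ring
  have hi1 : Integrable (fun x => u x ^ 2 - 2 * m * u x) μ := hu2.sub (hu.const_mul (2 * m))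
  have key : ∫ x, (u x - m) ^ 2 ∂μ = (∫ x, u x ^ 2 ∂μ) - m ^ 2 := by
    rw [integral_congr_ae (Filter.Eventually.of_forall hexp),
      integral_add hi1 (integrable_const _),
      integral_sub hu2 (hu.const_mul (2 * m)), integral_const_mul, integral_const]
    simp [← hm]
    ring
  have h0 : 0 ≤ ∫ x, (u x - m) ^ 2 ∂μ := integral_nonneg fun x => sq_nonneg _
  rw [key] at h0
  linarith

lemma aux_clamp_fderiv_le {d : ℕ} {g : Euc d → ℝ} (hg : Continuous g) {R : ℝ} (hR : 0 < R)
    (x : Euc d) :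
    ‖fderiv ℝ (fun y => max (min (g y) R) (-R)) x‖ ≤ ‖fderiv ℝ g x‖ := by
  set h : Euc d → ℝ := fun y => max (min (g y) R) (-R) with hh
  rcases lt_or_ge (g x) R with h1 | h1
  · rcases lt_or_ge (-R) (g x) with h2 | h2
    · have hev : h =ᶠ[nhds x] g := by
        have ho : IsOpen (g ⁻¹' Set.Ioo (-R) R) := isOpen_Ioo.preimage hg
        filter_upwards [ho.mem_nhds (show g x ∈ Set.Ioo (-R) R from ⟨h2, h1⟩)] with y hy
        obtain ⟨hy1, hy2⟩ : -R < g y ∧ g y < R := hy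
        simp only [hh]
        rw [min_eq_left hy2.le, max_eq_left hy1.le]
      rw [hev.fderiv_eq]
    · -- g x ≤ -R : global min
      have hmin : IsLocalMin h x := by
        apply Filter.Eventually.of_forall
        intro y
        have hx : h x = -R := by
          simp only [hh]
          rw [min_eq_left (h2.trans (by linarith)), max_eq_right h2]
        rw [hx]
        exact le_max_right _ _
      rw [hmin.fderiv_eq_zero]
      simp
  · -- R ≤ g x : global max
    have hmax : IsLocalMax h x := by
      apply Filter.Eventually.of_forall
      intro y
      have hx : h x = R := by
        simp only [hh]
        rw [min_eq_right h1, max_eq_left (by linarith)]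
      rw [hx]
      exact max_le (min_le_right _ _) (by linarith)
    rw [hmax.fderiv_eq_zero]
    simp

lemma aux_log4 : Real.log 4 = 2 * Real.log 2 := by
  rw [show (4 : ℝ) = 2 ^ (2 : ℕ) by norm_num, Real.log_pow]
  norm_num

lemma aux_T1 {s p : ℝ} (hs : 0 < s) (hp : 2 < p) :
    (s ^ (p / (p - 2)) / 2 ^ ((3 * p - 2) / (p - 2))) * 4 * ((4 / s) ^ (2 / (p - 2))) = s / 2 := by
  have hq : (0 : ℝ) < p - 2 := by linarith
  have h1 : (0 : ℝ) < s ^ (p / (p - 2)) / 2 ^ ((3 * p - 2) / (p - 2)) := by positivity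
  have h2 : (0 : ℝ) < (4 / s) ^ (2 / (p - 2)) := by positivity
  have hL : (0 : ℝ) < (s ^ (p / (p - 2)) / 2 ^ ((3 * p - 2) / (p - 2))) * 4 *
      ((4 / s) ^ (2 / (p - 2))) := by positivity
  rw [← Real.exp_log hL, ← Real.exp_log (show (0:ℝ) < s / 2 by positivity)]
  congr 1
  rw [Real.log_mul (by positivity) h2.ne', Real.log_mul h1.ne' (by norm_num),
    Real.log_div (by positivity) (by positivity), Real.log_rpow hs,
    Real.log_rpow (by norm_num : (0:ℝ) < 2), Real.log_rpow (by positivity : (0:ℝ) < 4 / s),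
    Real.log_div (by norm_num) hs.ne', Real.log_div hs.ne' (by norm_num), aux_log4]
  field_simp
  ring

lemma aux_T2 {s p A : ℝ} (hs : 0 < s) (hp : 2 < p) (hA : 0 < A) :
    A / ((4 / s) * A ^ ((p - 2) / p)) = s / 4 * A ^ (2 / p) := by
  have hp0 : p ≠ 0 := by positivity
  have hsum : (2 / p) + (p - 2) / p = 1 := by field_simp; ring
  rw [div_eq_iff (by positivity)]
  symm
  calc s / 4 * A ^ (2 / p) * (4 / s * A ^ ((p - 2) / p))
      = (s / 4 * (4 / s)) * (A ^ (2 / p) * A ^ ((p - 2) / p)) := by ring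
    _ = 1 * A ^ ((2 / p) + (p - 2) / p) := by
        rw [← Real.rpow_add hA]
        congr 1
        rw [div_mul_div_comm, mul_comm s 4]
        exact div_self (by positivity)
    _ = A := by rw [hsum, Real.rpow_one, one_mul]


set_option maxHeartbeats 2000000 in
/-- a weak Poincaré inequality implies a p-weak Poincaré inequality
where the oscillation is replaced by the centered `L^p` norm. -/
theorem stmt_9 (d : ℕ) (μ : Measure (Euc d)) (hprob : IsProbabilityMeasure μ)
    (β : ℝ → ℝ) (hβnonneg : ∀ s, 0 ≤ β s) (hβmono : Antitone β)
    (hwp : WeakPoincare μ β) :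
    ∀ p : ℝ, 2 < p → ∀ s : ℝ, 0 < s → ∀ f : Euc d → ℝ, BddLip f →
      var μ f ≤
        β (s ^ (p / (p - 2)) / 2 ^ ((3 * p - 2) / (p - 2))) *
            (∫ x, ‖fderiv ℝ f x‖ ^ 2 ∂μ)
          + s * (∫ x, |f x - ∫ y, f y ∂μ| ^ p ∂μ) ^ (2 / p) := by
  intro p hp s hs f hf
  obtain ⟨⟨K, hK⟩, ⟨M, hM⟩⟩ := hf
  have hq : (0 : ℝ) < p - 2 := by linarith
  have hp0 : (0 : ℝ) < p := by linarith
  have hfc : Continuous f := hK.continuous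
  set c := ∫ y, f y ∂μ with hc
  set g : Euc d → ℝ := fun x => f x - c with hgdef
  have hgK : LipschitzWith K g := LipschitzWith.of_dist_le_mul fun x y => by
    have := hK.dist_le_mul x y
    simpa [hgdef, Real.dist_eq] using this
  have hgc : Continuous g := hfc.sub continuous_const
  have hM0 : 0 ≤ M := (abs_nonneg (f 0)).trans (hM 0)
  set Mg := M + |c| with hMg
  have hgM : ∀ x, |g x| ≤ Mg := fun x =>
    (abs_sub (f x) c).trans (add_le_add_left (hM x) _)
  have hMg0 : 0 ≤ Mg := by positivity
  -- integrability of basic functions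
  have hif : Integrable f μ := aux_integrable_of_bound hfc.aestronglyMeasurable hM
  have hif2 : Integrable (fun x => f x ^ 2) μ :=
    aux_integrable_of_bound (hfc.pow 2).aestronglyMeasurable
      (M := M ^ 2) (fun x => by
        rw [abs_of_nonneg (sq_nonneg _)]; exact aux_sq_le_of_abs_le (hM x))
  have hig : Integrable g μ := aux_integrable_of_bound hgc.aestronglyMeasurable hgM
  have hig2 : Integrable (fun x => g x ^ 2) μ :=
    aux_integrable_of_bound (hgc.pow 2).aestronglyMeasurable
      (M := Mg ^ 2) (fun x => by
        rw [abs_of_nonneg (sq_nonneg _)]; exact aux_sq_le_of_abs_le (hgM x))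
  have hgp_cont : Continuous (fun x => |g x| ^ p) :=
    hgc.abs.rpow_const (fun x => Or.inr hp0.le)
  have higp : Integrable (fun x => |g x| ^ p) μ :=
    aux_integrable_of_bound hgp_cont.aestronglyMeasurable (M := Mg ^ p) (fun x => by
      rw [abs_of_nonneg (Real.rpow_nonneg (abs_nonneg _) p)]
      exact Real.rpow_le_rpow (abs_nonneg _) (hgM x) hp0.le)
  -- ∫ g = 0  and  var μ f = ∫ g²
  have hg0 : ∫ x, g x ∂μ = 0 := by
    rw [integral_sub hif (integrable_const c), integral_const]
    simp [← hc]
  have hvarf : var μ f = ∫ x, g x ^ 2 ∂μ := by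
    have hexp : ∀ x, g x ^ 2 = f x ^ 2 - (2 * c) * f x + c ^ 2 := fun x => by
      simp only [hgdef]; ring
    have hi1 : Integrable (fun x => f x ^ 2 - 2 * c * f x) μ := hif2.sub (hif.const_mul (2 * c))
    rw [var, integral_congr_ae (Filter.Eventually.of_forall hexp),
      integral_add hi1 (integrable_const _),
      integral_sub hif2 (hif.const_mul (2 * c)), integral_const_mul, integral_const]
    simp [← hc]
    ring
  set A := ∫ x, |g x| ^ p ∂μ with hA
  have hAeq : A = ∫ x, |f x - c| ^ p ∂μ := by
    rw [hA]
  have hAnn : 0 ≤ A := integral_nonneg fun x => Real.rpow_nonneg (abs_nonneg _) p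
  have hEnn : 0 ≤ ∫ x, ‖fderiv ℝ f x‖ ^ 2 ∂μ := integral_nonneg fun x => sq_nonneg _
  rcases eq_or_lt_of_le hAnn with hA0 | hApos
  · -- A = 0 : g = 0 a.e., var = 0
    have hg_ae : (fun x => |g x| ^ p) =ᵐ[μ] 0 :=
      (integral_eq_zero_iff_of_nonneg (fun x => Real.rpow_nonneg (abs_nonneg _) p) higp).mp
        hA0.symm
    have hg2_ae : (fun x => g x ^ 2) =ᵐ[μ] 0 := by
      filter_upwards [hg_ae] with x hx
      have : |g x| = 0 := by
        have := (Real.rpow_eq_zero (abs_nonneg _) (by positivity)).mp hx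
        exact this
      simp only [Pi.zero_apply]
      nlinarith [sq_abs (g x)]
    have hz : ∫ x, g x ^ 2 ∂μ = 0 := by
      rw [integral_congr_ae hg2_ae]; simp
    rw [hvarf, hz]
    have h1 : 0 ≤ s * A ^ (2 / p) := by positivity
    have hb : 0 ≤ β (s ^ (p / (p - 2)) / 2 ^ ((3 * p - 2) / (p - 2))) *
        (∫ x, ‖fderiv ℝ f x‖ ^ 2 ∂μ) := mul_nonneg (hβnonneg _) hEnn
    linarith
  · -- main case A > 0
    set t := s ^ (p / (p - 2)) / 2 ^ ((3 * p - 2) / (p - 2)) with ht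
    have htpos : 0 < t := by positivity
    set R := (4 / s) ^ (1 / (p - 2)) * A ^ (1 / p) with hRdef
    have hRpos : 0 < R := by positivity
    set h : Euc d → ℝ := fun x => max (min (g x) R) (-R) with hhdef
    have hhb : ∀ x, |h x| ≤ R := fun x => abs_le.2
      ⟨le_max_right _ _, max_le ((min_le_right _ _)) (by linarith)⟩
    have hclK : LipschitzWith 1 (fun a : ℝ => max (min a R) (-R)) :=
      LipschitzWith.of_dist_le_mul fun a b => by
        rw [Real.dist_eq, Real.dist_eq]
        calc |max (min a R) (-R) - max (min b R) (-R)| ≤ |min a R - min b R| :=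
              abs_max_sub_max_le_abs _ _ _
          _ ≤ max |a - b| |R - R| := abs_min_sub_min_le_max _ _ _ _
          _ ≤ 1 * |a - b| := by simp
    have hhK : LipschitzWith (1 * K) h := by
      have := hclK.comp hgK
      simpa [Function.comp_def, hhdef] using this
    have hhc : Continuous h := hhK.continuous
    have hih : Integrable h μ := aux_integrable_of_bound hhc.aestronglyMeasurable hhb
    have hih2 : Integrable (fun x => h x ^ 2) μ :=
      aux_integrable_of_bound (hhc.pow 2).aestronglyMeasurable (M := R ^ 2) (fun x => by
        rw [abs_of_nonneg (sq_nonneg _)]; exact aux_sq_le_of_abs_le (hhb x))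
    -- oscillation bound
    have hoscb : osc h ^ 2 ≤ (2 * R) ^ 2 := by
      have hne : (Set.range h).Nonempty := ⟨h 0, ⟨0, rfl⟩⟩
      have hub : ∀ b ∈ Set.range h, b ≤ R := by
        rintro b ⟨x, rfl⟩; exact (abs_le.1 (hhb x)).2
      have hlb : ∀ b ∈ Set.range h, -R ≤ b := by
        rintro b ⟨x, rfl⟩; exact (abs_le.1 (hhb x)).1
      have h1 : sSup (Set.range h) ≤ R := csSup_le hne hub
      have h2 : -R ≤ sInf (Set.range h) := le_csInf hne hlb
      have h3 : sInf (Set.range h) ≤ sSup (Set.range h) :=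
        le_trans (csInf_le ⟨-R, fun b hb => hlb b hb⟩ ⟨0, rfl⟩)
          (le_csSup ⟨R, fun b hb => hub b hb⟩ ⟨0, rfl⟩)
      have hosc1 : osc h ≤ 2 * R := by rw [osc]; linarith
      have hosc0 : 0 ≤ osc h := by rw [osc]; linarith
      exact pow_le_pow_left₀ hosc0 hosc1 2
    -- fderiv bound
    have hfd : ∀ x, ‖fderiv ℝ h x‖ ^ 2 ≤ ‖fderiv ℝ f x‖ ^ 2 := by
      intro x
      have h1 : ‖fderiv ℝ h x‖ ≤ ‖fderiv ℝ g x‖ := aux_clamp_fderiv_le hgc hRpos x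
      have h2 : fderiv ℝ g x = fderiv ℝ f x := fderiv_sub_const c
      rw [← h2]
      exact pow_le_pow_left₀ (norm_nonneg _) h1 2
    have hifd : Integrable (fun x => ‖fderiv ℝ f x‖ ^ 2) μ :=
      aux_integrable_of_bound
        (((measurable_fderiv ℝ f).norm.pow_const 2).aestronglyMeasurable)
        (M := (K : ℝ) ^ 2) (fun x => by
          rw [abs_of_nonneg (sq_nonneg _)]
          exact aux_sq_le_of_abs_le (by
            rw [abs_of_nonneg (norm_nonneg _)]
            exact norm_fderiv_le_of_lipschitz ℝ hK))
    have hintfd : ∫ x, ‖fderiv ℝ h x‖ ^ 2 ∂μ ≤ ∫ x, ‖fderiv ℝ f x‖ ^ 2 ∂μ :=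
      integral_mono_of_nonneg (Filter.Eventually.of_forall fun x => sq_nonneg _) hifd
        (Filter.Eventually.of_forall hfd)
    -- pointwise tail bounds
    have hRq : 0 < R ^ (p - 2) := Real.rpow_pos_of_pos hRpos _
    have htail : ∀ x, R ≤ |g x| → g x ^ 2 ≤ |g x| ^ p / R ^ (p - 2) := by
      intro x hx
      rw [le_div_iff₀ hRq]
      have hgx : 0 < |g x| := lt_of_lt_of_le hRpos hx
      have e1 : |g x| ^ p = |g x| ^ (2 : ℝ) * |g x| ^ (p - 2) := by
        rw [← Real.rpow_add hgx]
        norm_num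
      have e2 : |g x| ^ (2 : ℝ) = g x ^ 2 := by
        rw [show (2:ℝ) = ((2:ℕ):ℝ) by norm_num, Real.rpow_natCast, sq_abs]
      rw [e1, e2]
      exact mul_le_mul_of_nonneg_left (Real.rpow_le_rpow hRpos.le hx hq.le) (sq_nonneg _)
    have hP1 : ∀ x, g x ^ 2 ≤ h x ^ 2 + |g x| ^ p / R ^ (p - 2) := by
      intro x
      rcases le_or_gt (|g x|) R with hle | hgt
      · have : h x = g x := by
          simp only [hhdef]
          rw [min_eq_left (abs_le.1 hle).2, max_eq_left (abs_le.1 hle).1]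
        rw [this]
        have : 0 ≤ |g x| ^ p / R ^ (p - 2) :=
          div_nonneg (Real.rpow_nonneg (abs_nonneg _) p) hRq.le
        linarith
      · have := htail x hgt.le
        nlinarith [sq_nonneg (h x)]
    have hP2 : ∀ x, (h x - g x) ^ 2 ≤ |g x| ^ p / R ^ (p - 2) := by
      intro x
      rcases le_or_gt (|g x|) R with hle | hgt
      · have : h x = g x := by
          simp only [hhdef]
          rw [min_eq_left (abs_le.1 hle).2, max_eq_left (abs_le.1 hle).1]
        rw [this]
        simpa using div_nonneg (Real.rpow_nonneg (abs_nonneg _) p) hRq.le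
      · have hsq : (h x - g x) ^ 2 ≤ g x ^ 2 := by
          rcases lt_abs.1 hgt with h1 | h1
          · have hx : h x = R := by
              simp only [hhdef]
              rw [min_eq_right h1.le, max_eq_left (by linarith)]
            rw [hx]
            nlinarith
          · have hx : h x = -R := by
              simp only [hhdef]
              rw [min_eq_left (by linarith), max_eq_right (by linarith)]
            rw [hx]
            nlinarith
        exact hsq.trans (htail x hgt.le)
    -- integral chain
    have hidiff2 : Integrable (fun x => (h x - g x) ^ 2) μ :=
      aux_integrable_of_bound ((hhc.sub hgc).pow 2).aestronglyMeasurable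
        (M := (R + Mg) ^ 2) (fun x => by
          rw [abs_of_nonneg (sq_nonneg _)]
          refine aux_sq_le_of_abs_le ((abs_sub (h x) (g x)).trans ?_)
          exact add_le_add (hhb x) (hgM x))
    have hitail : Integrable (fun x => |g x| ^ p / R ^ (p - 2)) μ := higp.div_const _
    have step1 : ∫ x, g x ^ 2 ∂μ ≤ (∫ x, h x ^ 2 ∂μ) + A / R ^ (p - 2) := by
      calc ∫ x, g x ^ 2 ∂μ ≤ ∫ x, (h x ^ 2 + |g x| ^ p / R ^ (p - 2)) ∂μ :=
            integral_mono hig2 (hih2.add hitail) hP1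
        _ = (∫ x, h x ^ 2 ∂μ) + ∫ x, |g x| ^ p / R ^ (p - 2) ∂μ :=
            integral_add hih2 hitail
        _ = (∫ x, h x ^ 2 ∂μ) + A / R ^ (p - 2) := by rw [integral_div, ← hA]
    have hm2 : (∫ x, h x ∂μ) ^ 2 ≤ A / R ^ (p - 2) := by
      have e1 : ∫ x, h x ∂μ = ∫ x, (h x - g x) ∂μ := by
        rw [integral_sub hih hig, hg0, sub_zero]
      calc (∫ x, h x ∂μ) ^ 2 = (∫ x, (h x - g x) ∂μ) ^ 2 := by rw [e1]
        _ ≤ ∫ x, (h x - g x) ^ 2 ∂μ := aux_sq_integral_le (hih.sub hig) hidiff2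
        _ ≤ ∫ x, |g x| ^ p / R ^ (p - 2) ∂μ := integral_mono hidiff2 hitail hP2
        _ = A / R ^ (p - 2) := by rw [integral_div, ← hA]
    -- weak Poincaré for h
    have hwph := hwp t htpos h ⟨⟨1 * K, hhK⟩, ⟨R, hhb⟩⟩
    have hvarh : ∫ x, h x ^ 2 ∂μ = var μ h + (∫ x, h x ∂μ) ^ 2 := by
      rw [var]; ring
    -- arithmetic identities
    have hRq_eq : R ^ (p - 2) = (4 / s) * A ^ ((p - 2) / p) := by
      rw [hRdef, Real.mul_rpow (Real.rpow_nonneg (by positivity) _)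
        (Real.rpow_nonneg hAnn _), ← Real.rpow_mul (by positivity : (0:ℝ) ≤ 4 / s),
        ← Real.rpow_mul hAnn]
      congr 1
      · rw [show 1 / (p - 2) * (p - 2) = 1 by field_simp, Real.rpow_one]
      · congr 1
        field_simp
    have hR2_eq : R ^ (2 : ℕ) = (4 / s) ^ (2 / (p - 2)) * A ^ (2 / p) := by
      rw [← Real.rpow_natCast R 2, hRdef,
        Real.mul_rpow (Real.rpow_nonneg (by positivity) _) (Real.rpow_nonneg hAnn _),
        ← Real.rpow_mul (by positivity : (0:ℝ) ≤ 4 / s), ← Real.rpow_mul hAnn]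
      congr 2
      · push_cast; field_simp
      · push_cast; field_simp
    have harith : t * (2 * R) ^ 2 + 2 * (A / R ^ (p - 2)) = s * A ^ (2 / p) := by
      have e1 : (2 * R) ^ 2 = 4 * R ^ (2 : ℕ) := by ring
      rw [e1, hR2_eq, hRq_eq, aux_T2 hs hp hApos]
      have e2 : t * (4 * ((4 / s) ^ (2 / (p - 2)) * A ^ (2 / p)))
          = (t * 4 * (4 / s) ^ (2 / (p - 2))) * A ^ (2 / p) := by ring
      rw [e2, ht, aux_T1 hs hp]
      ring
    -- put it all together
    have final : var μ f ≤ β t * (∫ x, ‖fderiv ℝ f x‖ ^ 2 ∂μ) + t * (2 * R) ^ 2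
        + 2 * (A / R ^ (p - 2)) := by
      have b1 : β t * (∫ x, ‖fderiv ℝ h x‖ ^ 2 ∂μ) ≤ β t * (∫ x, ‖fderiv ℝ f x‖ ^ 2 ∂μ) :=
        mul_le_mul_of_nonneg_left hintfd (hβnonneg t)
      have b2 : t * osc h ^ 2 ≤ t * (2 * R) ^ 2 :=
        mul_le_mul_of_nonneg_left hoscb htpos.le
      rw [hvarf]
      calc ∫ x, g x ^ 2 ∂μ ≤ (∫ x, h x ^ 2 ∂μ) + A / R ^ (p - 2) := step1
        _ = var μ h + (∫ x, h x ∂μ) ^ 2 + A / R ^ (p - 2) := by rw [hvarh]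
        _ ≤ var μ h + 2 * (A / R ^ (p - 2)) := by linarith [hm2]
        _ ≤ β t * (∫ x, ‖fderiv ℝ h x‖ ^ 2 ∂μ) + t * osc h ^ 2 + 2 * (A / R ^ (p - 2)) := by
            linarith [hwph]
        _ ≤ _ := by linarith
    linarith [harith, final]
end
end

section
/- Let Z_1,…,Z_n be independent ℝ^d-valued random vectors whose laws satisfy weak logarithmic Sobolev inequalities with nonincreasing rate functions β^{LS}_{Z_1},…,β^{LS}_{Z_n}. Then the law of Z_1+…+Z_n satisfies a weak logarithmic Sobolev inequality with rate function s ↦ Σ_{i=1}^n β^{LS}_{Z_i}(s/n); that is, for every s > 0 and every bounded Lipschitz f : ℝ^d → ℝ, Ent(f²(Z_1+…+Z_n)) ≤ (Σ_i β^{LS}_{Z_i}(s/n)) · E[|∇f(Z_1+…+Z_n)|²] + s·Osc(f)². -/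
open MeasureTheory Real Filter Set
open scoped ENNReal RealInnerProductSpace BigOperators

noncomputable section

/-! ### Auxiliary lemmas -/

section EntAux

variable {X Y : Type*} [MeasurableSpace X] [MeasurableSpace Y]

/-- The function `t ↦ t log t`. -/
def entPhi (t : ℝ) : ℝ := t * Real.log t

lemma entPhi_def (t : ℝ) : entPhi t = t * Real.log t := rfl

lemma entPhi_measurable : Measurable entPhi :=
  measurable_id.mul Real.measurable_log

lemma sub_one_le_entPhi {t : ℝ} (ht : 0 ≤ t) : t - 1 ≤ entPhi t := by
  rcases eq_or_lt_of_le ht with h | h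
  · simp [entPhi, ← h]
  · have h2 : Real.log t⁻¹ ≤ t⁻¹ - 1 := Real.log_le_sub_one_of_pos (by positivity)
    rw [Real.log_inv] at h2
    have h3 := mul_le_mul_of_nonneg_left h2 h.le
    have h4 : t * (t⁻¹ - 1) = 1 - t := by field_simp
    unfold entPhi
    nlinarith

lemma abs_entPhi_le {C t : ℝ} (h0 : 0 ≤ t) (hC : t ≤ C) :
    |entPhi t| ≤ 1 + C * |Real.log C| := by
  have hC0 : 0 ≤ C := le_trans h0 hC
  have hnn : 0 ≤ C * |Real.log C| := mul_nonneg hC0 (abs_nonneg _)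
  rw [abs_le]
  constructor
  · have := sub_one_le_entPhi h0
    nlinarith
  · rcases le_or_gt t 1 with h1 | h1
    · have hle : entPhi t ≤ 0 := mul_nonpos_of_nonneg_of_nonpos h0 (Real.log_nonpos h0 h1)
      linarith
    · have hlog : Real.log t ≤ Real.log C := Real.log_le_log (by linarith) hC
      have hl0 : 0 ≤ Real.log t := Real.log_nonneg h1.le
      have hle : entPhi t ≤ C * Real.log C := mul_le_mul hC hlog hl0 hC0
      have h2 : Real.log C ≤ |Real.log C| := le_abs_self _
      nlinarith

lemma integrable_of_bdd {κ : Measure X} [IsFiniteMeasure κ] {g : X → ℝ}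
    (hg : AEStronglyMeasurable g κ) (B : ℝ) (hb : ∀ x, |g x| ≤ B) : Integrable g κ :=
  (integrable_const B).mono' hg (ae_of_all _ fun x => by
    simpa [Real.norm_eq_abs] using hb x)

lemma abs_integral_le_of_bdd {κ : Measure X} [IsProbabilityMeasure κ] {g : X → ℝ} (B : ℝ)
    (hb : ∀ x, |g x| ≤ B) : |∫ x, g x ∂κ| ≤ B := by
  have hball : ∀ᵐ x ∂κ, ‖g x‖ ≤ B := ae_of_all _ fun x => by
    rw [Real.norm_eq_abs]; exact hb x
  have h := norm_integral_le_of_norm_le_const hball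
  rw [Real.norm_eq_abs] at h
  simpa [measure_univ] using h

/-- Rewriting `entSq` through `t log t`. -/
lemma entSq_eq (κ : Measure X) [IsProbabilityMeasure κ] (g : X → ℝ) (hg : Measurable g)
    (C : ℝ) (hb : ∀ x, |g x| ≤ C) :
    entSq κ g = (∫ x, entPhi (g x ^ 2) ∂κ) - entPhi (∫ x, g x ^ 2 ∂κ) := by
  have hsqm : Measurable fun x => g x ^ 2 := hg.pow_const 2
  have hsqb : ∀ x, |g x ^ 2| ≤ C ^ 2 := fun x => by
    calc |g x ^ 2| = |g x| ^ 2 := by rw [abs_of_nonneg (sq_nonneg _), sq_abs]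
    _ ≤ C ^ 2 := pow_le_pow_left₀ (abs_nonneg _) (hb x) 2
  have hsqint : Integrable (fun x => g x ^ 2) κ :=
    integrable_of_bdd hsqm.aestronglyMeasurable _ hsqb
  have hM0 : 0 ≤ ∫ x, g x ^ 2 ∂κ := integral_nonneg fun x => sq_nonneg _
  rcases eq_or_lt_of_le hM0 with h0 | h0
  · have hae : (fun x => g x ^ 2) =ᵐ[κ] 0 :=
      (integral_eq_zero_iff_of_nonneg (fun x => sq_nonneg _) hsqint).mp h0.symm
    have h1 : entSq κ g = 0 := by
      unfold entSq
      rw [← h0]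
      simp
    have h2 : (fun x => entPhi (g x ^ 2)) =ᵐ[κ] fun _ => (0 : ℝ) :=
      hae.mono fun x hx => by
        have hx' : g x ^ 2 = 0 := hx
        simp [entPhi, hx']
    rw [h1, integral_congr_ae h2, ← h0]
    simp [entPhi]
  · have hpt : ∀ x, g x ^ 2 * Real.log (g x ^ 2 / ∫ y, g y ^ 2 ∂κ) =
        entPhi (g x ^ 2) - g x ^ 2 * Real.log (∫ y, g y ^ 2 ∂κ) := by
      intro x
      by_cases hx : g x = 0
      · simp [hx, entPhi]
      · rw [Real.log_div (pow_ne_zero 2 hx) (ne_of_gt h0), entPhi_def]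
        ring
    have hphiint : Integrable (fun x => entPhi (g x ^ 2)) κ := by
      refine integrable_of_bdd (entPhi_measurable.comp hsqm).aestronglyMeasurable
        (1 + C ^ 2 * |Real.log (C ^ 2)|) fun x => ?_
      exact abs_entPhi_le (sq_nonneg _) (le_of_abs_le (hsqb x))
    unfold entSq
    calc (∫ x, g x ^ 2 * Real.log (g x ^ 2 / ∫ y, g y ^ 2 ∂κ) ∂κ)
        = ∫ x, (entPhi (g x ^ 2) - g x ^ 2 * Real.log (∫ y, g y ^ 2 ∂κ)) ∂κ :=
          integral_congr_ae (ae_of_all _ hpt)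
      _ = (∫ x, entPhi (g x ^ 2) ∂κ) - ∫ x, g x ^ 2 * Real.log (∫ y, g y ^ 2 ∂κ) ∂κ :=
          integral_sub hphiint (hsqint.mul_const _)
      _ = (∫ x, entPhi (g x ^ 2) ∂κ) - entPhi (∫ x, g x ^ 2 ∂κ) := by
          rw [integral_mul_const, entPhi_def]

/-- Tensorisation core inequality for the entropy functional. -/
lemma ent_tensor (μ : Measure X) (ν : Measure Y) [IsProbabilityMeasure μ]
    [IsProbabilityMeasure ν] (F : X × Y → ℝ) (hF : Measurable F) (C : ℝ)
    (hF0 : ∀ p, 0 ≤ F p) (hFC : ∀ p, F p ≤ C)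
    (hM : 0 < ∫ p, F p ∂(μ.prod ν)) :
    (∫ y, entPhi (∫ x, F (x, y) ∂μ) ∂ν) + (∫ x, entPhi (∫ y, F (x, y) ∂ν) ∂μ) ≤
      (∫ p, entPhi (F p) ∂(μ.prod ν)) + entPhi (∫ p, F p ∂(μ.prod ν)) := by
  have habs : ∀ p, |F p| ≤ C := fun p => by rw [abs_of_nonneg (hF0 p)]; exact hFC p
  have hFint : Integrable F (μ.prod ν) := integrable_of_bdd hF.aestronglyMeasurable C habs
  set M := ∫ p, F p ∂(μ.prod ν) with hMdef
  set G := fun y : Y => ∫ x, F (x, y) ∂μ with hGdef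
  set m := fun x : X => ∫ y, F (x, y) ∂ν with hmdef
  have hGmeas : Measurable G := hF.stronglyMeasurable.integral_prod_left'.measurable
  have hmmeas : Measurable m := hF.stronglyMeasurable.integral_prod_right'.measurable
  have hsecY : ∀ y, Integrable (fun x => F (x, y)) μ := fun y =>
    integrable_of_bdd (hF.comp measurable_prodMk_right).aestronglyMeasurable C fun x => habs _
  have hsecX : ∀ x, Integrable (fun y => F (x, y)) ν := fun x =>
    integrable_of_bdd (hF.comp measurable_prodMk_left).aestronglyMeasurable C fun y => habs _
  have hG0 : ∀ y, 0 ≤ G y := fun y => integral_nonneg fun x => hF0 _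
  have hm0 : ∀ x, 0 ≤ m x := fun x => integral_nonneg fun y => hF0 _
  have hGC : ∀ y, G y ≤ C := fun y => by
    calc G y ≤ ∫ _, C ∂μ := integral_mono (hsecY y) (integrable_const C) fun x => hFC _
    _ = C := by simp
  have hmC : ∀ x, m x ≤ C := fun x => by
    calc m x ≤ ∫ _, C ∂ν := integral_mono (hsecX x) (integrable_const C) fun y => hFC _
    _ = C := by simp
  have hGabs : ∀ y, |G y| ≤ C := fun y => by rw [abs_of_nonneg (hG0 y)]; exact hGC y
  have hmabs : ∀ x, |m x| ≤ C := fun x => by rw [abs_of_nonneg (hm0 x)]; exact hmC x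
  have hGM : ∫ y, G y ∂ν = M := by
    simp only [hGdef, hMdef]
    exact (integral_prod_symm F hFint).symm
  have hmM : ∫ x, m x ∂μ = M := by
    simp only [hmdef, hMdef]
    exact (integral_prod F hFint).symm
  set B := 1 + C * |Real.log C| with hBdef
  -- a.e., `F p > 0` implies `G p.2 > 0`
  have h1 : ∀ᵐ p ∂(μ.prod ν), 0 < F p → 0 < G p.2 := by
    rw [ae_iff]
    have hT1 : MeasurableSet {p : X × Y | 0 < F p ∧ ¬0 < G p.2} :=
      (measurableSet_lt measurable_const hF).inter
        (measurableSet_lt measurable_const (hGmeas.comp measurable_snd)).compl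
    have hz : (μ.prod ν) {p : X × Y | 0 < F p ∧ ¬0 < G p.2} = 0 := by
      rw [Measure.prod_apply_symm hT1]
      have hy : ∀ y, μ ((fun x => (x, y)) ⁻¹' {p : X × Y | 0 < F p ∧ ¬0 < G p.2}) = 0 := by
        intro y
        by_cases hgy : 0 < G y
        · have he : ((fun x => (x, y)) ⁻¹' {p : X × Y | 0 < F p ∧ ¬0 < G p.2}) = ∅ := by
            ext x; simp [hgy]
          rw [he]; exact measure_empty
        · have hGy0 : (∫ x, F (x, y) ∂μ) = 0 := by
            have : G y = 0 := le_antisymm (not_lt.mp hgy) (hG0 y)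
            simpa only [hGdef] using this
          have hzero : ∀ᵐ x ∂μ, F (x, y) = 0 := by
            have h' := (integral_eq_zero_iff_of_nonneg (fun x => hF0 (x, y)) (hsecY y)).mp hGy0
            filter_upwards [h'] with x hx using hx
          refine measure_mono_null ?_ (ae_iff.mp hzero)
          intro x hx
          simp only [Set.mem_preimage, Set.mem_setOf_eq] at hx ⊢
          exact ne_of_gt hx.1
      calc (∫⁻ y, μ ((fun x => (x, y)) ⁻¹' {p : X × Y | 0 < F p ∧ ¬0 < G p.2}) ∂ν)
          = ∫⁻ _, 0 ∂ν := lintegral_congr hy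
        _ = 0 := lintegral_zero
    refine measure_mono_null ?_ hz
    intro p hp
    simp only [Set.mem_setOf_eq, Classical.not_imp] at hp ⊢
    exact hp
  -- a.e., `F p > 0` implies `m p.1 > 0`
  have h2 : ∀ᵐ p ∂(μ.prod ν), 0 < F p → 0 < m p.1 := by
    rw [ae_iff]
    have hT2 : MeasurableSet {p : X × Y | 0 < F p ∧ ¬0 < m p.1} :=
      (measurableSet_lt measurable_const hF).inter
        (measurableSet_lt measurable_const (hmmeas.comp measurable_fst)).compl
    have hz : (μ.prod ν) {p : X × Y | 0 < F p ∧ ¬0 < m p.1} = 0 := by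
      rw [Measure.prod_apply hT2]
      have hx : ∀ x, ν (Prod.mk x ⁻¹' {p : X × Y | 0 < F p ∧ ¬0 < m p.1}) = 0 := by
        intro x
        by_cases hmx : 0 < m x
        · have he : (Prod.mk x ⁻¹' {p : X × Y | 0 < F p ∧ ¬0 < m p.1}) = ∅ := by
            ext y; simp [hmx]
          rw [he]; exact measure_empty
        · have hm0' : (∫ y, F (x, y) ∂ν) = 0 := by
            have : m x = 0 := le_antisymm (not_lt.mp hmx) (hm0 x)
            simpa only [hmdef] using this
          have hzero : ∀ᵐ y ∂ν, F (x, y) = 0 := by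
            have h' := (integral_eq_zero_iff_of_nonneg (fun y => hF0 (x, y)) (hsecX x)).mp hm0'
            filter_upwards [h'] with y hy using hy
          refine measure_mono_null ?_ (ae_iff.mp hzero)
          intro y hy
          simp only [Set.mem_preimage, Set.mem_setOf_eq] at hy ⊢
          exact ne_of_gt hy.1
      calc (∫⁻ x, ν (Prod.mk x ⁻¹' {p : X × Y | 0 < F p ∧ ¬0 < m p.1}) ∂μ)
          = ∫⁻ _, 0 ∂μ := lintegral_congr hx
        _ = 0 := lintegral_zero
    refine measure_mono_null ?_ hz
    intro p hp
    simp only [Set.mem_setOf_eq, Classical.not_imp] at hp ⊢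
    exact hp
  -- pointwise key inequality
  have key : ∀ᵐ p ∂(μ.prod ν),
      0 ≤ entPhi (F p) - F p * Real.log (G p.2) - F p * Real.log (m p.1) +
          F p * Real.log M - F p + m p.1 * G p.2 / M := by
    filter_upwards [h1, h2] with p hp1 hp2
    rcases eq_or_lt_of_le (hF0 p) with h | h
    · have e : entPhi (F p) - F p * Real.log (G p.2) - F p * Real.log (m p.1) +
          F p * Real.log M - F p + m p.1 * G p.2 / M = m p.1 * G p.2 / M := by
        rw [← h, entPhi_def]; ring
      rw [e]
      exact div_nonneg (mul_nonneg (hm0 _) (hG0 _)) hM.le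
    · have hGp := hp1 h
      have hmp := hp2 h
      have harg : 0 < m p.1 * G p.2 / (M * F p) :=
        div_pos (mul_pos hmp hGp) (mul_pos hM h)
      have hlog := Real.log_le_sub_one_of_pos harg
      have hexp : Real.log (m p.1 * G p.2 / (M * F p)) =
          Real.log (m p.1) + Real.log (G p.2) - Real.log M - Real.log (F p) := by
        rw [Real.log_div (ne_of_gt (mul_pos hmp hGp)) (ne_of_gt (mul_pos hM h)),
          Real.log_mul (ne_of_gt hmp) (ne_of_gt hGp),
          Real.log_mul (ne_of_gt hM) (ne_of_gt h)]
        ring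
      rw [hexp] at hlog
      have hmul := mul_le_mul_of_nonneg_left hlog (hF0 p)
      have hMne : M ≠ 0 := ne_of_gt hM
      have hFne : F p ≠ 0 := ne_of_gt h
      have hid : F p * (m p.1 * G p.2 / (M * F p) - 1) = m p.1 * G p.2 / M - F p := by
        field_simp
      rw [hid] at hmul
      rw [entPhi_def]
      nlinarith [hmul]
  -- integrability of all pieces
  have hPhiF : Integrable (fun p => entPhi (F p)) (μ.prod ν) :=
    integrable_of_bdd (entPhi_measurable.comp hF).aestronglyMeasurable B
      fun p => abs_entPhi_le (hF0 p) (hFC p)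
  have hlogG : Measurable fun p : X × Y => Real.log (G p.2) :=
    (Real.measurable_log.comp hGmeas).comp measurable_snd
  have hFlogG : Integrable (fun p : X × Y => F p * Real.log (G p.2)) (μ.prod ν) := by
    refine (integrable_prod_iff' (hF.mul hlogG).aestronglyMeasurable).mpr ⟨?_, ?_⟩
    · exact ae_of_all _ fun y => (hsecY y).mul_const (Real.log (G y))
    · have heq : ∀ y, (∫ x, ‖F (x, y) * Real.log (G y)‖ ∂μ) = G y * |Real.log (G y)| := by
        intro y
        have hpt : ∀ x, ‖F (x, y) * Real.log (G y)‖ = F (x, y) * |Real.log (G y)| := fun x => by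
          rw [norm_mul, Real.norm_eq_abs, Real.norm_eq_abs, abs_of_nonneg (hF0 _)]
        rw [integral_congr_ae (ae_of_all _ hpt), integral_mul_const]
      refine integrable_of_bdd
        ((hF.mul hlogG).norm.stronglyMeasurable.integral_prod_left').aestronglyMeasurable
        B fun y => ?_
      show |∫ x, ‖F (x, y) * Real.log (G y)‖ ∂μ| ≤ B
      have h' : G y * |Real.log (G y)| = |entPhi (G y)| := by
        rw [entPhi_def, abs_mul, abs_of_nonneg (hG0 y)]
      rw [heq y, abs_of_nonneg (mul_nonneg (hG0 y) (abs_nonneg _)), h']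
      exact abs_entPhi_le (hG0 y) (hGC y)
  have hlogm : Measurable fun p : X × Y => Real.log (m p.1) :=
    (Real.measurable_log.comp hmmeas).comp measurable_fst
  have hFlogm : Integrable (fun p : X × Y => F p * Real.log (m p.1)) (μ.prod ν) := by
    refine (integrable_prod_iff (hF.mul hlogm).aestronglyMeasurable).mpr ⟨?_, ?_⟩
    · exact ae_of_all _ fun x => (hsecX x).mul_const (Real.log (m x))
    · have heq : ∀ x, (∫ y, ‖F (x, y) * Real.log (m x)‖ ∂ν) = m x * |Real.log (m x)| := by
        intro x
        have hpt : ∀ y, ‖F (x, y) * Real.log (m x)‖ = F (x, y) * |Real.log (m x)| := fun y => by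
          rw [norm_mul, Real.norm_eq_abs, Real.norm_eq_abs, abs_of_nonneg (hF0 _)]
        rw [integral_congr_ae (ae_of_all _ hpt), integral_mul_const]
      refine integrable_of_bdd
        ((hF.mul hlogm).norm.stronglyMeasurable.integral_prod_right').aestronglyMeasurable
        B fun x => ?_
      show |∫ y, ‖F (x, y) * Real.log (m x)‖ ∂ν| ≤ B
      have h' : m x * |Real.log (m x)| = |entPhi (m x)| := by
        rw [entPhi_def, abs_mul, abs_of_nonneg (hm0 x)]
      rw [heq x, abs_of_nonneg (mul_nonneg (hm0 x) (abs_nonneg _)), h']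
      exact abs_entPhi_le (hm0 x) (hmC x)
  have hFlogM : Integrable (fun p => F p * Real.log M) (μ.prod ν) := hFint.mul_const _
  have hmGint : Integrable (fun p : X × Y => m p.1 * G p.2 / M) (μ.prod ν) := by
    refine Integrable.div_const ?_ M
    refine integrable_of_bdd
      ((hmmeas.comp measurable_fst).mul (hGmeas.comp measurable_snd)).aestronglyMeasurable
      (C * C) fun p => ?_
    rw [abs_mul]
    exact mul_le_mul (hmabs _) (hGabs _) (abs_nonneg _)
      (le_trans (abs_nonneg (m p.1)) (hmabs p.1))
  -- integral identities
  have hIFlogG : ∫ p, F p * Real.log (G p.2) ∂(μ.prod ν) = ∫ y, entPhi (G y) ∂ν := by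
    rw [integral_prod_symm _ hFlogG]
    refine integral_congr_ae (ae_of_all _ fun y => ?_)
    show (∫ x, F (x, y) * Real.log (G y) ∂μ) = entPhi (G y)
    rw [integral_mul_const, entPhi_def]
  have hIFlogm : ∫ p, F p * Real.log (m p.1) ∂(μ.prod ν) = ∫ x, entPhi (m x) ∂μ := by
    rw [integral_prod _ hFlogm]
    refine integral_congr_ae (ae_of_all _ fun x => ?_)
    show (∫ y, F (x, y) * Real.log (m x) ∂ν) = entPhi (m x)
    rw [integral_mul_const, entPhi_def]
  have hIFlogM : ∫ p, F p * Real.log M ∂(μ.prod ν) = M * Real.log M := by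
    rw [integral_mul_const]
  have hImG : ∫ p, m p.1 * G p.2 / M ∂(μ.prod ν) = M := by
    have h' : (∫ p : X × Y, m p.1 * G p.2 ∂(μ.prod ν)) = M * M := by
      rw [integral_prod_mul, hmM, hGM]
    rw [integral_div, h', mul_div_assoc, div_self (ne_of_gt hM), mul_one]
  -- integrate the key inequality
  have hnn := integral_nonneg_of_ae key
  have hsplit : (∫ p, (entPhi (F p) - F p * Real.log (G p.2) - F p * Real.log (m p.1) +
        F p * Real.log M - F p + m p.1 * G p.2 / M) ∂(μ.prod ν)) =
      (((((∫ p, entPhi (F p) ∂(μ.prod ν)) - ∫ p, F p * Real.log (G p.2) ∂(μ.prod ν)) -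
        ∫ p, F p * Real.log (m p.1) ∂(μ.prod ν)) + ∫ p, F p * Real.log M ∂(μ.prod ν)) -
        ∫ p, F p ∂(μ.prod ν)) + ∫ p, m p.1 * G p.2 / M ∂(μ.prod ν) := by
    have i1 : Integrable (fun p : X × Y => entPhi (F p) - F p * Real.log (G p.2)) (μ.prod ν) :=
      hPhiF.sub hFlogG
    have i2 : Integrable (fun p : X × Y => entPhi (F p) - F p * Real.log (G p.2) -
        F p * Real.log (m p.1)) (μ.prod ν) := i1.sub hFlogm
    have i3 : Integrable (fun p : X × Y => entPhi (F p) - F p * Real.log (G p.2) -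
        F p * Real.log (m p.1) + F p * Real.log M) (μ.prod ν) := i2.add hFlogM
    have i4 : Integrable (fun p : X × Y => entPhi (F p) - F p * Real.log (G p.2) -
        F p * Real.log (m p.1) + F p * Real.log M - F p) (μ.prod ν) := i3.sub hFint
    rw [integral_add i4 hmGint, integral_sub i3 hFint, integral_add i2 hFlogM,
      integral_sub i1 hFlogm, integral_sub hPhiF hFlogG]
  rw [hsplit, hIFlogG, hIFlogm, hIFlogM, hImG, ← hMdef] at hnn
  have hfinal : (∫ y, entPhi (G y) ∂ν) + (∫ x, entPhi (m x) ∂μ) ≤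
      (∫ p, entPhi (F p) ∂(μ.prod ν)) + entPhi M := by
    have hPM := entPhi_def M
    linarith
  simpa only [hGdef, hmdef, hMdef] using hfinal

end EntAux

section ShiftAux

variable {d : ℕ}

lemma fderiv_shift_right (f : Euc d → ℝ) (c x : Euc d) :
    fderiv ℝ (fun z => f (z + c)) x = fderiv ℝ f (x + c) := by
  by_cases h : DifferentiableAt ℝ f (x + c)
  · have h1 : HasFDerivAt (fun z : Euc d => z + c) (ContinuousLinearMap.id ℝ (Euc d)) x :=
      (hasFDerivAt_id x).add_const c
    simpa [Function.comp_def] using (h.hasFDerivAt.comp x h1).fderiv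
  · rw [fderiv_zero_of_not_differentiableAt h, fderiv_zero_of_not_differentiableAt]
    intro hd
    apply h
    have h2 : DifferentiableAt ℝ (fun z : Euc d => z - c) (x + c) :=
      (differentiable_id.sub_const c) _
    have hd' : DifferentiableAt ℝ (fun z => f (z + c)) ((x + c) - c) := by
      simpa using hd
    have h3 := hd'.comp (x + c) h2
    have he : ((fun z => f (z + c)) ∘ fun z : Euc d => z - c) = f := by
      funext z; simp
    rwa [he] at h3

lemma fderiv_shift_left (f : Euc d → ℝ) (c x : Euc d) :
    fderiv ℝ (fun z => f (c + z)) x = fderiv ℝ f (c + x) := by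
  have he : (fun z : Euc d => f (c + z)) = fun z => f (z + c) := funext fun z => by
    rw [add_comm]
  rw [he, fderiv_shift_right, add_comm]

lemma osc_shift_right (f : Euc d → ℝ) (c : Euc d) : osc (fun x => f (x + c)) = osc f := by
  unfold osc
  have he : Set.range (fun x : Euc d => f (x + c)) = Set.range f := by
    ext u
    constructor
    · rintro ⟨x, rfl⟩; exact ⟨x + c, rfl⟩
    · rintro ⟨x, rfl⟩; exact ⟨x - c, by simp⟩
  rw [he]

lemma osc_shift_left (f : Euc d → ℝ) (c : Euc d) : osc (fun x => f (c + x)) = osc f := by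
  have he : (fun x : Euc d => f (c + x)) = fun x => f (x + c) := funext fun x => by
    rw [add_comm]
  rw [he, osc_shift_right]

lemma bddLip_shift_right (f : Euc d → ℝ) (c : Euc d) (hf : BddLip f) :
    BddLip fun x => f (x + c) := by
  obtain ⟨⟨K, hK⟩, ⟨C0, hC0⟩⟩ := hf
  refine ⟨⟨K, ?_⟩, ⟨C0, fun x => hC0 _⟩⟩
  have h1 : LipschitzWith 1 fun x : Euc d => x + c :=
    LipschitzWith.of_dist_le_mul fun x y => by
      rw [dist_add_right, NNReal.coe_one, one_mul]
  simpa [Function.comp_def] using hK.comp h1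

lemma bddLip_shift_left (f : Euc d → ℝ) (c : Euc d) (hf : BddLip f) :
    BddLip fun x => f (c + x) := by
  have he : (fun x : Euc d => f (c + x)) = fun x => f (x + c) := funext fun x => by
    rw [add_comm]
  rw [he]
  exact bddLip_shift_right f c hf

end ShiftAux

section ConvAux

/-- Weak log-Sobolev inequality for the convolution of two measures. -/
lemma wls_conv {d : ℕ} (μ ν : Measure (Euc d)) [IsProbabilityMeasure μ] [IsProbabilityMeasure ν]
    (a b : ℝ → ℝ) (hμ : WeakLogSobolev μ a) (hν : WeakLogSobolev ν b)
    {s t : ℝ} (hs : 0 < s) (ht : 0 < t) (has : 0 ≤ a s) (hbt : 0 ≤ b t)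
    (f : Euc d → ℝ) (hf : BddLip f) :
    entSq (Measure.map (fun p : Euc d × Euc d => p.1 + p.2) (μ.prod ν)) f ≤
      (a s + b t) * (∫ x, ‖fderiv ℝ f x‖ ^ 2
          ∂(Measure.map (fun p : Euc d × Euc d => p.1 + p.2) (μ.prod ν))) +
        (s + t) * osc f ^ 2 := by
  obtain ⟨⟨K, hK⟩, ⟨C0, hC0⟩⟩ := id hf
  have hfm : Measurable f := hK.continuous.measurable
  have hT : Measurable fun p : Euc d × Euc d => p.1 + p.2 := measurable_fst.add measurable_snd
  haveI hPmap : IsProbabilityMeasure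
      (Measure.map (fun p : Euc d × Euc d => p.1 + p.2) (μ.prod ν)) :=
    Measure.isProbabilityMeasure_map hT.aemeasurable
  have hdm : Measurable fun x : Euc d => ‖fderiv ℝ f x‖ ^ 2 :=
    (measurable_fderiv ℝ f).norm.pow_const 2
  have hdb : ∀ x : Euc d, ‖fderiv ℝ f x‖ ^ 2 ≤ (K : ℝ) ^ 2 := fun x =>
    pow_le_pow_left₀ (norm_nonneg _) (norm_fderiv_le_of_lipschitz ℝ hK) 2
  have hdabs : ∀ x : Euc d, |‖fderiv ℝ f x‖ ^ 2| ≤ (K : ℝ) ^ 2 := fun x => by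
    rw [abs_of_nonneg (sq_nonneg _)]; exact hdb x
  have hintmap : ∀ g : Euc d → ℝ, Measurable g →
      (∫ x, g x ∂(Measure.map (fun p : Euc d × Euc d => p.1 + p.2) (μ.prod ν))) =
        ∫ p : Euc d × Euc d, g (p.1 + p.2) ∂(μ.prod ν) := fun g hg =>
    integral_map hT.aemeasurable hg.aestronglyMeasurable
  have hgrad : (∫ x, ‖fderiv ℝ f x‖ ^ 2
        ∂(Measure.map (fun p : Euc d × Euc d => p.1 + p.2) (μ.prod ν))) =
      ∫ p : Euc d × Euc d, ‖fderiv ℝ f (p.1 + p.2)‖ ^ 2 ∂(μ.prod ν) := hintmap _ hdm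
  have hgradnn : 0 ≤ ∫ x, ‖fderiv ℝ f x‖ ^ 2
      ∂(Measure.map (fun p : Euc d × Euc d => p.1 + p.2) (μ.prod ν)) :=
    integral_nonneg fun x => sq_nonneg _
  have hFmeas : Measurable fun p : Euc d × Euc d => f (p.1 + p.2) ^ 2 :=
    (hfm.comp hT).pow_const 2
  have hFb : ∀ p : Euc d × Euc d, f (p.1 + p.2) ^ 2 ≤ C0 ^ 2 := fun p => by
    calc f (p.1 + p.2) ^ 2 = |f (p.1 + p.2)| ^ 2 := (sq_abs _).symm
    _ ≤ C0 ^ 2 := pow_le_pow_left₀ (abs_nonneg _) (hC0 _) 2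
  have hFabs : ∀ p : Euc d × Euc d, |f (p.1 + p.2) ^ 2| ≤ C0 ^ 2 := fun p => by
    rw [abs_of_nonneg (sq_nonneg _)]; exact hFb p
  have hMnn : 0 ≤ ∫ p : Euc d × Euc d, f (p.1 + p.2) ^ 2 ∂(μ.prod ν) :=
    integral_nonneg fun p => sq_nonneg _
  rcases eq_or_lt_of_le hMnn with hM0 | hMpos
  · -- degenerate case : `∫ f² = 0`
    have hM0' : (∫ x, f x ^ 2
        ∂(Measure.map (fun p : Euc d × Euc d => p.1 + p.2) (μ.prod ν))) = 0 := by
      rw [hintmap _ (hfm.pow_const 2)]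
      exact hM0.symm
    have hent0 : entSq (Measure.map (fun p : Euc d × Euc d => p.1 + p.2) (μ.prod ν)) f = 0 := by
      unfold entSq
      rw [hM0']
      simp
    rw [hent0]
    have hrhs1 : 0 ≤ (a s + b t) * (∫ x, ‖fderiv ℝ f x‖ ^ 2
        ∂(Measure.map (fun p : Euc d × Euc d => p.1 + p.2) (μ.prod ν))) :=
      mul_nonneg (by linarith) hgradnn
    have hrhs2 : 0 ≤ (s + t) * osc f ^ 2 := mul_nonneg (by linarith) (sq_nonneg _)
    linarith
  · -- main case
    have hB := (1 : ℝ) + C0 ^ 2 * |Real.log (C0 ^ 2)|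
    -- slice inequalities from the weak log-Sobolev hypotheses
    have hshiftR : ∀ y : Euc d, entSq μ (fun x => f (x + y)) ≤
        a s * (∫ x, ‖fderiv ℝ f (x + y)‖ ^ 2 ∂μ) + s * osc f ^ 2 := by
      intro y
      have h := hμ s hs _ (bddLip_shift_right f y hf)
      have e1 : (∫ x, ‖fderiv ℝ (fun x => f (x + y)) x‖ ^ 2 ∂μ) =
          ∫ x, ‖fderiv ℝ f (x + y)‖ ^ 2 ∂μ := by
        refine integral_congr_ae (ae_of_all _ fun x => ?_)
        show ‖fderiv ℝ (fun z => f (z + y)) x‖ ^ 2 = ‖fderiv ℝ f (x + y)‖ ^ 2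
        rw [fderiv_shift_right]
      rw [e1, osc_shift_right] at h
      exact h
    have hshiftL : ∀ x : Euc d, entSq ν (fun y => f (x + y)) ≤
        b t * (∫ y, ‖fderiv ℝ f (x + y)‖ ^ 2 ∂ν) + t * osc f ^ 2 := by
      intro x
      have h := hν t ht _ (bddLip_shift_left f x hf)
      have e1 : (∫ y, ‖fderiv ℝ (fun y => f (x + y)) y‖ ^ 2 ∂ν) =
          ∫ y, ‖fderiv ℝ f (x + y)‖ ^ 2 ∂ν := by
        refine integral_congr_ae (ae_of_all _ fun y => ?_)
        show ‖fderiv ℝ (fun z => f (x + z)) y‖ ^ 2 = ‖fderiv ℝ f (x + y)‖ ^ 2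
        rw [fderiv_shift_left]
      rw [e1, osc_shift_left] at h
      exact h
    -- slice identities
    have hsliceR : ∀ y : Euc d, entSq μ (fun x => f (x + y)) =
        (∫ x, entPhi (f (x + y) ^ 2) ∂μ) - entPhi (∫ x, f (x + y) ^ 2 ∂μ) := fun y =>
      entSq_eq μ _ (hfm.comp (measurable_add_const y)) C0 fun x => hC0 _
    have hsliceL : ∀ x : Euc d, entSq ν (fun y => f (x + y)) =
        (∫ y, entPhi (f (x + y) ^ 2) ∂ν) - entPhi (∫ y, f (x + y) ^ 2 ∂ν) := fun x =>
      entSq_eq ν _ (hfm.comp (measurable_const_add x)) C0 fun y => hC0 _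
    -- tensorisation
    have htensor : (∫ y, entPhi (∫ x, f (x + y) ^ 2 ∂μ) ∂ν) +
        (∫ x, entPhi (∫ y, f (x + y) ^ 2 ∂ν) ∂μ) ≤
        (∫ p : Euc d × Euc d, entPhi (f (p.1 + p.2) ^ 2) ∂(μ.prod ν)) +
          entPhi (∫ p : Euc d × Euc d, f (p.1 + p.2) ^ 2 ∂(μ.prod ν)) :=
      ent_tensor μ ν (fun p => f (p.1 + p.2) ^ 2) hFmeas (C0 ^ 2)
        (fun p => sq_nonneg _) hFb hMpos
    -- integrability on the product
    have hPhiFint : Integrable (fun p : Euc d × Euc d => entPhi (f (p.1 + p.2) ^ 2))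
        (μ.prod ν) :=
      integrable_of_bdd (entPhi_measurable.comp hFmeas).aestronglyMeasurable
        (1 + C0 ^ 2 * |Real.log (C0 ^ 2)|)
        fun p => abs_entPhi_le (sq_nonneg _) (hFb p)
    have hPhiF_y : (∫ p : Euc d × Euc d, entPhi (f (p.1 + p.2) ^ 2) ∂(μ.prod ν)) =
        ∫ y, ∫ x, entPhi (f (x + y) ^ 2) ∂μ ∂ν := integral_prod_symm _ hPhiFint
    have hPhiF_x : (∫ p : Euc d × Euc d, entPhi (f (p.1 + p.2) ^ 2) ∂(μ.prod ν)) =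
        ∫ x, ∫ y, entPhi (f (x + y) ^ 2) ∂ν ∂μ := integral_prod _ hPhiFint
    have hgint : Integrable (fun p : Euc d × Euc d => ‖fderiv ℝ f (p.1 + p.2)‖ ^ 2)
        (μ.prod ν) :=
      integrable_of_bdd (hdm.comp hT).aestronglyMeasurable ((K : ℝ) ^ 2) fun p => hdabs _
    have hgrad_y : (∫ p : Euc d × Euc d, ‖fderiv ℝ f (p.1 + p.2)‖ ^ 2 ∂(μ.prod ν)) =
        ∫ y, ∫ x, ‖fderiv ℝ f (x + y)‖ ^ 2 ∂μ ∂ν := integral_prod_symm _ hgint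
    have hgrad_x : (∫ p : Euc d × Euc d, ‖fderiv ℝ f (p.1 + p.2)‖ ^ 2 ∂(μ.prod ν)) =
        ∫ x, ∫ y, ‖fderiv ℝ f (x + y)‖ ^ 2 ∂ν ∂μ := integral_prod _ hgint
    -- integrability of the sliced functions
    have hintA : Integrable (fun y => ∫ x, entPhi (f (x + y) ^ 2) ∂μ) ν := by
      refine integrable_of_bdd
        ((entPhi_measurable.comp hFmeas).stronglyMeasurable.integral_prod_left').aestronglyMeasurable
        (1 + C0 ^ 2 * |Real.log (C0 ^ 2)|) fun y => ?_
      exact abs_integral_le_of_bdd _ fun x => abs_entPhi_le (sq_nonneg _) (hFb (x, y))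
    have hintA' : Integrable (fun x => ∫ y, entPhi (f (x + y) ^ 2) ∂ν) μ := by
      refine integrable_of_bdd
        ((entPhi_measurable.comp hFmeas).stronglyMeasurable.integral_prod_right').aestronglyMeasurable
        (1 + C0 ^ 2 * |Real.log (C0 ^ 2)|) fun x => ?_
      exact abs_integral_le_of_bdd _ fun y => abs_entPhi_le (sq_nonneg _) (hFb (x, y))
    have hintB : Integrable (fun y => entPhi (∫ x, f (x + y) ^ 2 ∂μ)) ν := by
      refine integrable_of_bdd
        (entPhi_measurable.comp hFmeas.stronglyMeasurable.integral_prod_left'.measurable).aestronglyMeasurable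
        (1 + C0 ^ 2 * |Real.log (C0 ^ 2)|) fun y => ?_
      refine abs_entPhi_le (integral_nonneg fun x => sq_nonneg _) ?_
      calc (∫ x, f (x + y) ^ 2 ∂μ) ≤ ∫ _, C0 ^ 2 ∂μ := by
            refine integral_mono ?_ (integrable_const _) fun x => hFb (x, y)
            exact integrable_of_bdd
              ((hFmeas.comp measurable_prodMk_right).aestronglyMeasurable) (C0 ^ 2)
              fun x => hFabs (x, y)
      _ = C0 ^ 2 := by simp
    have hintB' : Integrable (fun x => entPhi (∫ y, f (x + y) ^ 2 ∂ν)) μ := by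
      refine integrable_of_bdd
        (entPhi_measurable.comp hFmeas.stronglyMeasurable.integral_prod_right'.measurable).aestronglyMeasurable
        (1 + C0 ^ 2 * |Real.log (C0 ^ 2)|) fun x => ?_
      refine abs_entPhi_le (integral_nonneg fun y => sq_nonneg _) ?_
      calc (∫ y, f (x + y) ^ 2 ∂ν) ≤ ∫ _, C0 ^ 2 ∂ν := by
            refine integral_mono ?_ (integrable_const _) fun y => hFb (x, y)
            exact integrable_of_bdd
              ((hFmeas.comp measurable_prodMk_left).aestronglyMeasurable) (C0 ^ 2)
              fun y => hFabs (x, y)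
      _ = C0 ^ 2 := by simp
    have hintD : Integrable (fun y => ∫ x, ‖fderiv ℝ f (x + y)‖ ^ 2 ∂μ) ν := by
      refine integrable_of_bdd
        ((hdm.comp hT).stronglyMeasurable.integral_prod_left').aestronglyMeasurable
        ((K : ℝ) ^ 2) fun y => ?_
      exact abs_integral_le_of_bdd _ fun x => hdabs _
    have hintD' : Integrable (fun x => ∫ y, ‖fderiv ℝ f (x + y)‖ ^ 2 ∂ν) μ := by
      refine integrable_of_bdd
        ((hdm.comp hT).stronglyMeasurable.integral_prod_right').aestronglyMeasurable
        ((K : ℝ) ^ 2) fun x => ?_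
      exact abs_integral_le_of_bdd _ fun y => hdabs _
    -- integrate the slice inequalities
    have hIy : (∫ y, ((∫ x, entPhi (f (x + y) ^ 2) ∂μ) - entPhi (∫ x, f (x + y) ^ 2 ∂μ)) ∂ν) ≤
        ∫ y, (a s * (∫ x, ‖fderiv ℝ f (x + y)‖ ^ 2 ∂μ) + s * osc f ^ 2) ∂ν := by
      refine integral_mono (hintA.sub hintB) ((hintD.const_mul (a s)).add (integrable_const _))
        fun y => ?_
      calc (∫ x, entPhi (f (x + y) ^ 2) ∂μ) - entPhi (∫ x, f (x + y) ^ 2 ∂μ)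
          = entSq μ (fun x => f (x + y)) := (hsliceR y).symm
        _ ≤ a s * (∫ x, ‖fderiv ℝ f (x + y)‖ ^ 2 ∂μ) + s * osc f ^ 2 := hshiftR y
    have hIx : (∫ x, ((∫ y, entPhi (f (x + y) ^ 2) ∂ν) - entPhi (∫ y, f (x + y) ^ 2 ∂ν)) ∂μ) ≤
        ∫ x, (b t * (∫ y, ‖fderiv ℝ f (x + y)‖ ^ 2 ∂ν) + t * osc f ^ 2) ∂μ := by
      refine integral_mono (hintA'.sub hintB') ((hintD'.const_mul (b t)).add (integrable_const _))
        fun x => ?_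
      calc (∫ y, entPhi (f (x + y) ^ 2) ∂ν) - entPhi (∫ y, f (x + y) ^ 2 ∂ν)
          = entSq ν (fun y => f (x + y)) := (hsliceL x).symm
        _ ≤ b t * (∫ y, ‖fderiv ℝ f (x + y)‖ ^ 2 ∂ν) + t * osc f ^ 2 := hshiftL x
    rw [integral_sub hintA hintB,
      integral_add (hintD.const_mul (a s)) (integrable_const _),
      integral_const_mul, integral_const] at hIy
    simp only [measure_univ, probReal_univ, ENNReal.toReal_one, one_smul] at hIy
    rw [← hPhiF_y, ← hgrad_y] at hIy
    rw [integral_sub hintA' hintB',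
      integral_add (hintD'.const_mul (b t)) (integrable_const _),
      integral_const_mul, integral_const] at hIx
    simp only [measure_univ, probReal_univ, ENNReal.toReal_one, one_smul] at hIx
    rw [← hPhiF_x, ← hgrad_x] at hIx
    -- entSq of the mapped measure
    have hA : entSq (Measure.map (fun p : Euc d × Euc d => p.1 + p.2) (μ.prod ν)) f =
        (∫ p : Euc d × Euc d, entPhi (f (p.1 + p.2) ^ 2) ∂(μ.prod ν)) -
          entPhi (∫ p : Euc d × Euc d, f (p.1 + p.2) ^ 2 ∂(μ.prod ν)) := by
      rw [entSq_eq _ f hfm C0 hC0, hintmap _ (hfm.pow_const 2),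
        hintmap (fun x => entPhi (f x ^ 2)) (entPhi_measurable.comp (hfm.pow_const 2))]
    rw [hA, hgrad]
    linarith [hIy, hIx, htensor]

end ConvAux

section SumAux

/-- Main induction : weak log-Sobolev inequality for the law of a sum. -/
lemma wls_sum (d : ℕ) : ∀ (k : ℕ) (μ : Fin (k + 1) → Measure (Euc d)),
    (∀ i, IsProbabilityMeasure (μ i)) → ∀ β : Fin (k + 1) → ℝ → ℝ,
    (∀ i s, 0 ≤ β i s) → (∀ i, WeakLogSobolev (μ i) (β i)) →
    WeakLogSobolev (Measure.map (fun z : Fin (k + 1) → Euc d => ∑ i, z i) (Measure.pi μ))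
      (fun s => ∑ i, β i (s / ((k + 1 : ℕ) : ℝ))) := by
  intro k
  induction k with
  | zero =>
    intro μ hprob β hβ hwls s hs f hf
    haveI := hprob
    have hmeq : Measure.map (fun z : Fin 1 → Euc d => ∑ i, z i) (Measure.pi μ) = μ 0 := by
      have h1 : Measure.pi μ = Measure.pi fun _ : Fin 1 => μ 0 := by
        congr 1
        funext i
        exact congrArg μ (Fin.eq_zero i)
      have h2 : (fun z : Fin 1 → Euc d => ∑ i, z i) = fun z => z default := by
        funext z
        simp [Fin.sum_univ_one]
      rw [h1, h2]
      exact (measurePreserving_funUnique (μ 0) (Fin 1)).map_eq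
    rw [hmeq]
    have h := hwls 0 s hs f hf
    simpa using h
  | succ k ih =>
    intro μ hprob β hβ hwls
    haveI := hprob
    haveI : ∀ i : Fin (k + 1), IsProbabilityMeasure (μ i.succ) := fun i => hprob _
    have hsmeas : Measurable fun z : Fin (k + 1) → Euc d => ∑ i, z i :=
      Finset.measurable_sum _ fun i _ => measurable_pi_apply i
    haveI : IsProbabilityMeasure
        (Measure.map (fun z : Fin (k + 1) → Euc d => ∑ i, z i)
          (Measure.pi fun i => μ i.succ)) :=
      Measure.isProbabilityMeasure_map hsmeas.aemeasurable
    have hIH := ih (fun i => μ i.succ) (fun i => hprob _) (fun i => β i.succ)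
      (fun i s => hβ _ _) (fun i => hwls _)
    have hT : Measurable fun p : Euc d × Euc d => p.1 + p.2 := measurable_fst.add measurable_snd
    have hsucc : (fun j : Fin (k + 1) => μ (Fin.succAbove 0 j)) = fun j => μ j.succ := by
      funext j
      rw [Fin.succAbove_zero]
    have h1 := (measurePreserving_piFinSuccAbove μ 0).map_eq
    have hdec : Measure.map (fun z : Fin (k + 1 + 1) → Euc d => ∑ i, z i) (Measure.pi μ) =
        Measure.map (fun p : Euc d × Euc d => p.1 + p.2)
          ((μ 0).prod (Measure.map (fun z : Fin (k + 1) → Euc d => ∑ i, z i)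
            (Measure.pi fun i => μ i.succ))) := by
      calc Measure.map (fun z : Fin (k + 1 + 1) → Euc d => ∑ i, z i) (Measure.pi μ)
          = Measure.map (((fun p : Euc d × Euc d => p.1 + p.2) ∘
              (Prod.map (id : Euc d → Euc d) (fun z : Fin (k + 1) → Euc d => ∑ i, z i))) ∘
              (MeasurableEquiv.piFinSuccAbove (fun _ : Fin (k + 1 + 1) => Euc d) 0))
              (Measure.pi μ) := by
            congr 1
            funext z
            show (∑ i, z i) = z 0 + ∑ j : Fin (k + 1), z (Fin.succAbove 0 j)
            rw [Fin.sum_univ_succ]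
            simp [Fin.succAbove_zero]
        _ = Measure.map ((fun p : Euc d × Euc d => p.1 + p.2) ∘
              (Prod.map (id : Euc d → Euc d) (fun z : Fin (k + 1) → Euc d => ∑ i, z i)))
              (Measure.map
                (MeasurableEquiv.piFinSuccAbove (fun _ : Fin (k + 1 + 1) => Euc d) 0)
                (Measure.pi μ)) :=
            (Measure.map_map (hT.comp (measurable_id.prodMap hsmeas))
              (MeasurableEquiv.measurable _)).symm
        _ = Measure.map ((fun p : Euc d × Euc d => p.1 + p.2) ∘
              (Prod.map (id : Euc d → Euc d) (fun z : Fin (k + 1) → Euc d => ∑ i, z i)))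
              ((μ 0).prod (Measure.pi fun j => μ (Fin.succAbove 0 j))) := by rw [h1]
        _ = Measure.map (fun p : Euc d × Euc d => p.1 + p.2)
              (Measure.map
                (Prod.map (id : Euc d → Euc d) (fun z : Fin (k + 1) → Euc d => ∑ i, z i))
                ((μ 0).prod (Measure.pi fun j => μ (Fin.succAbove 0 j)))) :=
            (Measure.map_map hT (measurable_id.prodMap hsmeas)).symm
        _ = Measure.map (fun p : Euc d × Euc d => p.1 + p.2)
              ((μ 0).prod (Measure.map (fun z : Fin (k + 1) → Euc d => ∑ i, z i)
                (Measure.pi fun i => μ i.succ))) := by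
            rw [hsucc, ← Measure.map_prod_map _ _ measurable_id hsmeas, Measure.map_id]
    rw [hdec]
    intro s hs f hf
    have hk1pos : (0 : ℝ) < (k : ℝ) + 1 := by positivity
    have hk2pos : (0 : ℝ) < (k : ℝ) + 2 := by positivity
    have hs1 : 0 < s / ((k : ℝ) + 2) := by positivity
    have ht1 : 0 < s * ((k : ℝ) + 1) / ((k : ℝ) + 2) := by positivity
    have hconv := wls_conv (μ 0)
      (Measure.map (fun z : Fin (k + 1) → Euc d => ∑ i, z i) (Measure.pi fun i => μ i.succ))
      (β 0) (fun u => ∑ i : Fin (k + 1), β i.succ (u / ((k + 1 : ℕ) : ℝ)))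
      (hwls 0) hIH hs1 ht1 (hβ 0 _) (Finset.sum_nonneg fun i _ => hβ _ _) f hf
    have harg : s * ((k : ℝ) + 1) / ((k : ℝ) + 2) / ((k + 1 : ℕ) : ℝ)
        = s / ((k + 1 + 1 : ℕ) : ℝ) := by
      have hne1 : ((k : ℝ) + 1) ≠ 0 := ne_of_gt hk1pos
      have hne2 : ((k : ℝ) + 2) ≠ 0 := ne_of_gt hk2pos
      push_cast
      field_simp
      ring
    have hs2 : s / ((k : ℝ) + 2) = s / ((k + 1 + 1 : ℕ) : ℝ) := by
      push_cast
      ring_nf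
    have hsum : s / ((k : ℝ) + 2) + s * ((k : ℝ) + 1) / ((k : ℝ) + 2) = s := by
      have hne2 : ((k : ℝ) + 2) ≠ 0 := ne_of_gt hk2pos
      field_simp
      ring
    calc entSq (Measure.map (fun p : Euc d × Euc d => p.1 + p.2)
          ((μ 0).prod (Measure.map (fun z : Fin (k + 1) → Euc d => ∑ i, z i)
            (Measure.pi fun i => μ i.succ)))) f
        ≤ (β 0 (s / ((k : ℝ) + 2)) +
            ∑ i : Fin (k + 1), β i.succ
              (s * ((k : ℝ) + 1) / ((k : ℝ) + 2) / ((k + 1 : ℕ) : ℝ))) *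
            (∫ x, ‖fderiv ℝ f x‖ ^ 2
              ∂(Measure.map (fun p : Euc d × Euc d => p.1 + p.2)
                ((μ 0).prod (Measure.map (fun z : Fin (k + 1) → Euc d => ∑ i, z i)
                  (Measure.pi fun i => μ i.succ))))) +
          (s / ((k : ℝ) + 2) + s * ((k : ℝ) + 1) / ((k : ℝ) + 2)) * osc f ^ 2 := hconv
      _ = (∑ i : Fin (k + 1 + 1), β i (s / ((k + 1 + 1 : ℕ) : ℝ))) *
            (∫ x, ‖fderiv ℝ f x‖ ^ 2
              ∂(Measure.map (fun p : Euc d × Euc d => p.1 + p.2)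
                ((μ 0).prod (Measure.map (fun z : Fin (k + 1) → Euc d => ∑ i, z i)
                  (Measure.pi fun i => μ i.succ))))) + s * osc f ^ 2 := by
          rw [harg, hsum, hs2,
            Fin.sum_univ_succ (f := fun i : Fin (k + 1 + 1) => β i (s / ((k + 1 + 1 : ℕ) : ℝ)))]

end SumAux

/-- the law of the sum of independent random vectors whose laws
satisfy weak logarithmic Sobolev inequalities satisfies a weak logarithmic
Sobolev inequality with rate `s ↦ Σ_i β_i(s/n)`. -/
theorem stmt_18 (n : ℕ) (hn : 0 < n) (d : ℕ)
    (μ : Fin n → Measure (Euc d))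
    (hprob : ∀ i, IsProbabilityMeasure (μ i))
    (β : Fin n → ℝ → ℝ)
    (hβnonneg : ∀ i s, 0 ≤ β i s) (hβmono : ∀ i, Antitone (β i))
    (hwls : ∀ i, WeakLogSobolev (μ i) (β i)) :
    WeakLogSobolev
      (Measure.map (fun z : Fin n → Euc d => ∑ i, z i) (Measure.pi μ))
      (fun s => ∑ i, β i (s / n)) := by
  obtain ⟨k, rfl⟩ : ∃ k, n = k + 1 := ⟨n - 1, by omega⟩
  exact wls_sum d k μ hprob β hβnonneg hwls
end
end
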